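/- arXiv:1311.3122 — 8 statements merged into one kernel-verified Lean document; each statement's English description precedes it below -/
import Mathlib

section
/- Let 0 < r and let K be a compact subset of the open disk {z ∈ ℂ : |z| < r}. Then there exists a constant c > 0, depending only on K and r, such that for every function f : ℂ → ℂ that is continuous on the closed disk {z : |z| ≤ r} and holomorphic on the open disk {z : |z| < r}, one has sup_{z ∈ K} |f(z)| ≤ c · ( (1/2π) ∫_0^{2π} |f(r·e^{iθ})|² dθ )^{1/2}. -/
open Real MeasureTheory

private lemma CS_aux (g : ℝ → ℝ) (hg : Continuous g) (hgnn : ∀ x, 0 ≤ g x) :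
    ∫ θ in (0:ℝ)..(2*π), g θ ≤ Real.sqrt (2*π) * Real.sqrt (∫ θ in (0:ℝ)..(2*π), (g θ)^2) := by
  have h2π : (0:ℝ) ≤ 2*π := by positivity
  set μ := volume.restrict (Set.Ioc (0:ℝ) (2*π)) with hμ
  have hfin : IsFiniteMeasure μ := by
    constructor
    rw [hμ, Measure.restrict_apply_univ]
    simp [Real.volume_Ioc]
    exact ENNReal.mul_lt_top (by simp) ENNReal.ofReal_lt_top
  obtain ⟨C, hC⟩ := (isCompact_Icc (a := (0:ℝ)) (b := 2*π)).exists_bound_of_continuousOn hg.continuousOn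
  have hmg : MemLp g (ENNReal.ofReal 2) μ := by
    apply MemLp.of_bound hg.aestronglyMeasurable.restrict C
    rw [ae_restrict_iff' measurableSet_Ioc]
    exact Filter.Eventually.of_forall fun x hx => hC x (Set.Ioc_subset_Icc_self hx)
  have hm1 : MemLp (fun _ : ℝ => (1:ℝ)) (ENNReal.ofReal 2) μ := memLp_const 1
  have hconj : Real.HolderConjugate 2 2 := by constructor <;> norm_num
  have H := MeasureTheory.integral_mul_norm_le_Lp_mul_Lq hconj hmg hm1
  simp only [norm_one, mul_one, Real.norm_eq_abs] at H
  have hgeq : ∀ x, |g x| = g x := fun x => abs_of_nonneg (hgnn x)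
  have hμv : (∫ _a, (1:ℝ)^(2:ℝ) ∂μ) = 2*π := by
    simp [hμ, Real.volume_Ioc, ENNReal.toReal_ofReal h2π, Real.pi_pos.le]
  have hA : (∫ a, |g a| ^ (2:ℝ) ∂μ) = ∫ θ in Set.Ioc (0:ℝ) (2*π), (g θ)^2 := by
    rw [hμ]
    refine integral_congr_ae (Filter.Eventually.of_forall fun x => ?_)
    show |g x| ^ (2:ℝ) = g x ^ 2
    rw [hgeq, ← Real.rpow_natCast (g x) 2]; norm_num
  rw [hμv, hA] at H
  have hint_nn : 0 ≤ ∫ θ in Set.Ioc (0:ℝ) (2*π), (g θ)^2 :=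
    integral_nonneg fun x => sq_nonneg _
  rw [intervalIntegral.integral_of_le h2π, intervalIntegral.integral_of_le h2π]
  calc ∫ θ in Set.Ioc (0:ℝ) (2*π), g θ = ∫ a, |g a| ∂μ := by
        rw [hμ]; exact (integral_congr_ae (Filter.Eventually.of_forall fun x => (hgeq x).symm))
    _ ≤ (∫ θ in Set.Ioc (0:ℝ) (2*π), (g θ)^2) ^ (1/(2:ℝ)) * (2*π) ^ (1/(2:ℝ)) := H
    _ = Real.sqrt (2*π) * Real.sqrt (∫ θ in Set.Ioc (0:ℝ) (2*π), (g θ)^2) := by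
        rw [mul_comm, ← Real.sqrt_eq_rpow, ← Real.sqrt_eq_rpow]

theorem stmt_0 (r : ℝ) (hr : 0 < r) (K : Set ℂ) (hK : IsCompact K)
    (hKr : K ⊆ Metric.ball (0 : ℂ) r) :
    ∃ c > 0, ∀ f : ℂ → ℂ,
      ContinuousOn f (Metric.closedBall (0 : ℂ) r) →
      DifferentiableOn ℂ f (Metric.ball (0 : ℂ) r) →
      ∀ z ∈ K, ‖f z‖ ≤
        c * Real.sqrt ((1 / (2 * π)) * ∫ θ in (0 : ℝ)..(2 * π),
          ‖f ((r : ℂ) * Complex.exp (θ * Complex.I))‖ ^ 2) := by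
  rcases K.eq_empty_or_nonempty with rfl | hne
  · exact ⟨1, one_pos, by simp⟩
  obtain ⟨z₀, hz₀K, hz₀⟩ := hK.exists_isMaxOn hne continuous_norm.continuousOn
  set ρ := ‖z₀‖ with hρ
  have hρr : ρ < r := by simpa using hKr hz₀K
  have hrρ : 0 < r - ρ := sub_pos.mpr hρr
  refine ⟨r / (r - ρ), div_pos hr hrρ, ?_⟩
  intro f hc hd z hz
  have hzρ : ‖z‖ ≤ ρ := hz₀ hz
  have hz' : ‖z‖ ≤ ρ := hzρ
  have hdc : DiffContOnCl ℂ f (Metric.ball (0:ℂ) r) :=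
    ⟨hd, by rwa [closure_ball (0:ℂ) hr.ne']⟩
  have key := hdc.circleIntegral_sub_inv_smul (hKr hz)
  have hfz : f z = (2 * π * Complex.I : ℂ)⁻¹ • ∮ w in C(0, r), (w - z)⁻¹ • f w := by
    rw [key, smul_smul, inv_mul_cancel₀ (by simp [Real.pi_ne_zero, Complex.ext_iff]), one_smul]
  set g : ℝ → ℝ := fun θ => ‖f (circleMap 0 r θ)‖ with hg
  have hcm : ∀ θ, circleMap 0 r θ ∈ Metric.closedBall (0:ℂ) r := fun θ =>
    Metric.sphere_subset_closedBall (circleMap_mem_sphere (0:ℂ) hr.le θ)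
  have hfc : Continuous (fun θ => f (circleMap 0 r θ)) :=
    hc.comp_continuous (continuous_circleMap 0 r) hcm
  have hgc : Continuous g := continuous_norm.comp hfc
  have hgnn : ∀ θ, 0 ≤ g θ := fun θ => norm_nonneg _
  have hne' : ∀ θ : ℝ, circleMap 0 r θ - z ≠ 0 := by
    intro θ
    have h1 : r - ρ ≤ ‖circleMap 0 r θ - z‖ := by
      calc r - ρ ≤ ‖circleMap 0 r θ‖ - ‖z‖ := by
            simp [abs_of_pos hr]; linarith [hz']
        _ ≤ ‖circleMap 0 r θ - z‖ := norm_sub_norm_le _ _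
    intro h; rw [h] at h1; simp at h1; linarith
  have hIc : Continuous (fun θ : ℝ =>
      deriv (circleMap 0 r) θ • (circleMap 0 r θ - z)⁻¹ • f (circleMap 0 r θ)) := by
    simp only [deriv_circleMap]
    exact ((continuous_circleMap 0 r).mul continuous_const).smul
      ((((continuous_circleMap 0 r).sub continuous_const).inv₀ hne').smul hfc)
  have hbound : ∀ θ : ℝ,
      ‖deriv (circleMap 0 r) θ • (circleMap 0 r θ - z)⁻¹ • f (circleMap 0 r θ)‖
        ≤ (r / (r - ρ)) * g θ := by
    intro θ
    rw [norm_smul, norm_smul, deriv_circleMap]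
    have h1 : r - ρ ≤ ‖circleMap 0 r θ - z‖ := by
      calc r - ρ ≤ ‖circleMap 0 r θ‖ - ‖z‖ := by
            simp [abs_of_pos hr]; linarith [hz']
        _ ≤ ‖circleMap 0 r θ - z‖ := norm_sub_norm_le _ _
    have h2 : ‖(circleMap 0 r θ - z)⁻¹‖ ≤ (r - ρ)⁻¹ := by
      rw [norm_inv]
      exact inv_anti₀ hrρ h1
    have h3 : ‖circleMap 0 r θ * Complex.I‖ = r := by
      simp [abs_of_pos hr]
    have hfg : ‖f (circleMap 0 r θ)‖ = g θ := rfl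
    rw [h3, hfg, div_eq_mul_inv, mul_assoc]
    exact mul_le_mul_of_nonneg_left
      (mul_le_mul_of_nonneg_right h2 (norm_nonneg _)) hr.le
  have h2π : (0:ℝ) < 2*π := by positivity
  set I₂ : ℝ := ∫ θ in (0:ℝ)..(2*π), (g θ)^2 with hI₂
  have hI₂nn : 0 ≤ I₂ := by
    rw [hI₂, intervalIntegral.integral_of_le h2π.le]
    exact integral_nonneg fun x => sq_nonneg _
  have hoint : ‖∮ w in C(0, r), (w - z)⁻¹ • f w‖
      ≤ (r / (r - ρ)) * (Real.sqrt (2*π) * Real.sqrt I₂) := by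
    calc ‖∮ w in C(0, r), (w - z)⁻¹ • f w‖
        = ‖∫ θ in (0:ℝ)..(2*π),
            deriv (circleMap 0 r) θ • (circleMap 0 r θ - z)⁻¹ • f (circleMap 0 r θ)‖ := rfl
      _ ≤ ∫ θ in (0:ℝ)..(2*π),
            ‖deriv (circleMap 0 r) θ • (circleMap 0 r θ - z)⁻¹ • f (circleMap 0 r θ)‖ :=
          intervalIntegral.norm_integral_le_integral_norm h2π.le
      _ ≤ ∫ θ in (0:ℝ)..(2*π), (r / (r - ρ)) * g θ := by
          apply intervalIntegral.integral_mono_on h2π.le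
            (hIc.norm.intervalIntegrable _ _)
            ((continuous_const.mul hgc).intervalIntegrable _ _)
          exact fun θ _ => hbound θ
      _ = (r / (r - ρ)) * ∫ θ in (0:ℝ)..(2*π), g θ := by
          rw [intervalIntegral.integral_const_mul]
      _ ≤ (r / (r - ρ)) * (Real.sqrt (2*π) * Real.sqrt I₂) :=
          mul_le_mul_of_nonneg_left (CS_aux g hgc hgnn) (by positivity)
  have hnorm_inv : ‖(2 * ↑π * Complex.I : ℂ)⁻¹‖ = (2*π)⁻¹ := by
    simp [abs_of_pos Real.pi_pos]
  have hIrw : (∫ θ in (0:ℝ)..(2*π),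
      ‖f ((r : ℂ) * Complex.exp (θ * Complex.I))‖ ^ 2) = I₂ := by
    rw [hI₂]
    apply intervalIntegral.integral_congr
    intro θ _
    simp [hg, circleMap]
  have hsq : Real.sqrt (2*π) * Real.sqrt (2*π) = 2*π := Real.mul_self_sqrt h2π.le
  have habs : ‖f z‖ = ‖f z‖ := rfl
  rw [habs, hfz, norm_smul, hnorm_inv, hIrw]
  calc (2*π)⁻¹ * ‖∮ w in C(0, r), (w - z)⁻¹ • f w‖
      ≤ (2*π)⁻¹ * ((r / (r - ρ)) * (Real.sqrt (2*π) * Real.sqrt I₂)) :=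
        mul_le_mul_of_nonneg_left hoint (by positivity)
    _ = r / (r - ρ) * Real.sqrt ((1 / (2*π)) * I₂) := by
        have hs0 : Real.sqrt (2*π) ≠ 0 := by positivity
        have hkey : (2*π)⁻¹ * Real.sqrt (2*π) = (Real.sqrt (2*π))⁻¹ := by
          refine eq_inv_of_mul_eq_one_right ?_
          rw [mul_comm, mul_assoc, hsq]
          exact inv_mul_cancel₀ h2π.ne'
        rw [Real.sqrt_mul (by positivity) I₂, one_div, Real.sqrt_inv, ← hkey]
        ring
end

section
/- Let B(z) = C · ∏_{i=1}^n (z − a_i)/(1 − conj(a_i)·z) be a finite Blaschke product, and suppose ∑_{i=1}^n (1 − |a_i|)/(1 + |a_i|) > 1. Then the restriction of B to the unit circle is expanding: |B'(z)| > 1 for every z ∈ ℂ with |z| = 1, where B' denotes the complex derivative of B. -/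
theorem stmt_8 (n : ℕ) (a : Fin n → ℂ) (ha : ∀ i, ‖a i‖ < 1)
    (C : ℂ) (hC : ‖C‖ = 1)
    (B : ℂ → ℂ)
    (hB : ∀ w : ℂ, B w = C * ∏ i, (w - a i) / (1 - (starRingEnd ℂ) (a i) * w))
    (hexp : (∑ i, (1 - ‖a i‖) / (1 + ‖a i‖)) > 1) :
    ∀ z : ℂ, ‖z‖ = 1 → 1 < ‖deriv B z‖ := by
  have hBfun : B = fun w => C * ∏ i, (w - a i) / (1 - (starRingEnd ℂ) (a i) * w) :=
    funext hB
  intro z hz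
  have hnz : Complex.normSq z = 1 := by rw [Complex.normSq_eq_norm_sq, hz]; norm_num
  have hzz : (starRingEnd ℂ) z * z = 1 := by
    rw [← Complex.normSq_eq_conj_mul_self, hnz]; norm_num
  set f : Fin n → ℂ → ℂ := fun i w => (w - a i) / (1 - (starRingEnd ℂ) (a i) * w) with hf_def
  set d : Fin n → ℂ := fun i => 1 - (starRingEnd ℂ) (a i) * z with hd_def
  have habsd : ∀ i, ‖(starRingEnd ℂ) (a i) * z‖ < 1 := by
    intro i
    rw [norm_mul, Complex.norm_conj, hz, mul_one]
    exact ha i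
  have hd : ∀ i, d i ≠ 0 := by
    intro i h
    have h1 : (starRingEnd ℂ) (a i) * z = 1 := (sub_eq_zero.mp h).symm
    have h2 := habsd i
    rw [h1] at h2
    simp at h2
  -- |z - a i| = |d i|
  have hzd : ∀ i, z * (starRingEnd ℂ) (z - a i) = d i := by
    intro i
    simp only [map_sub, hd_def]
    linear_combination hzz
  have hfabs : ∀ i, ‖f i z‖ = 1 := by
    intro i
    have h1 : ‖z - a i‖ = ‖d i‖ := by
      have := congrArg (fun x : ℂ => ‖x‖) (hzd i)
      rwa [norm_mul, hz, one_mul, Complex.norm_conj] at this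
    have hf : f i z = (z - a i) / d i := rfl
    rw [hf, norm_div, h1]
    exact div_self (norm_ne_zero_iff.mpr (hd i))
  -- derivative of each factor
  set g : Fin n → ℂ := fun i => (1 - (starRingEnd ℂ) (a i) * a i) / (d i) ^ 2 with hg_def
  have hder : ∀ i, HasDerivAt (f i) (g i) z := by
    intro i
    have h1 : HasDerivAt (fun w : ℂ => w - a i) 1 z := (hasDerivAt_id z).sub_const _
    have h2 : HasDerivAt (fun w : ℂ => 1 - (starRingEnd ℂ) (a i) * w)
        (-(starRingEnd ℂ) (a i)) z := by
      simpa using (((hasDerivAt_id z).const_mul ((starRingEnd ℂ) (a i))).const_sub 1)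
    have h3 : HasDerivAt (f i) _ z := h1.div h2 (hd i)
    convert h3 using 1
    simp only [hg_def, hd_def]
    ring
  have hprod : HasDerivAt (fun w => ∏ i, f i w)
      (∑ i, (∏ j ∈ Finset.univ.erase i, f j z) • g i) z :=
    HasDerivAt.fun_finsetProd (fun i _ => hder i)
  have hB' : deriv B z = C * ∑ i, (∏ j ∈ Finset.univ.erase i, f j z) * g i := by
    rw [hBfun]
    have := (hprod.const_mul C).deriv
    simp only [smul_eq_mul] at this
    exact this
  -- |B z| = 1
  have hBz : ‖B z‖ = 1 := by
    rw [hB, norm_mul, hC, one_mul, norm_prod]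
    exact Finset.prod_eq_one (fun i _ => hfabs i)
  -- the key quantity
  set T : ℂ := (starRingEnd ℂ) (B z) * z * deriv B z with hT_def
  have hTabs : ‖T‖ = ‖deriv B z‖ := by
    rw [hT_def, norm_mul, norm_mul, Complex.norm_conj, hBz, hz, one_mul, one_mul]
  -- each term of T is real and explicit
  have hterm : ∀ i, z * (starRingEnd ℂ) (f i z) * g i
      = ((1 - Complex.normSq (a i)) / Complex.normSq (d i) : ℝ) := by
    intro i
    have hcd : (starRingEnd ℂ) (d i) * d i = (Complex.normSq (d i) : ℂ) :=
      (Complex.normSq_eq_conj_mul_self).symm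
    have hca : (starRingEnd ℂ) (a i) * a i = (Complex.normSq (a i) : ℂ) :=
      (Complex.normSq_eq_conj_mul_self).symm
    have hcdne : (starRingEnd ℂ) (d i) ≠ 0 := by simpa using hd i
    have hf : f i z = (z - a i) / d i := rfl
    have h1 : z * (starRingEnd ℂ) (f i z) = d i / (starRingEnd ℂ) (d i) := by
      rw [hf, map_div₀, mul_div_assoc', hzd i]
    rw [h1]
    simp only [hg_def]
    have h2 : d i / (starRingEnd ℂ) (d i) * ((1 - (starRingEnd ℂ) (a i) * a i) / d i ^ 2)
        = (1 - (starRingEnd ℂ) (a i) * a i) / ((starRingEnd ℂ) (d i) * d i) := by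
      rw [div_mul_div_comm]
      rw [show (starRingEnd ℂ) (d i) * d i ^ 2 = d i * ((starRingEnd ℂ) (d i) * d i) by ring]
      exact mul_div_mul_left _ _ (hd i)
    rw [h2, hcd, hca]
    push_cast
    ring
  have htermfull : ∀ i ∈ (Finset.univ : Finset (Fin n)),
      (starRingEnd ℂ) (C * ∏ j, f j z) * z * (C * ((∏ j ∈ Finset.univ.erase i, f j z) * g i))
      = (((1 - Complex.normSq (a i)) / Complex.normSq (d i) : ℝ) : ℂ) := by
    intro i _
    have hP : (starRingEnd ℂ) (∏ j, f j z) * ∏ j ∈ Finset.univ.erase i, f j z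
        = (starRingEnd ℂ) (f i z) := by
      rw [← Finset.mul_prod_erase Finset.univ (fun j => f j z) (Finset.mem_univ i)]
      rw [map_mul, map_prod, mul_assoc, ← Finset.prod_mul_distrib]
      have h2 : ∀ j ∈ Finset.univ.erase i, (starRingEnd ℂ) (f j z) * f j z = 1 := by
        intro j _
        rw [← Complex.normSq_eq_conj_mul_self, Complex.normSq_eq_norm_sq, hfabs j]
        norm_num
      rw [Finset.prod_congr rfl h2, Finset.prod_const_one, mul_one]
    have hCC : (starRingEnd ℂ) C * C = 1 := by
      rw [← Complex.normSq_eq_conj_mul_self, Complex.normSq_eq_norm_sq, hC]; norm_num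
    calc (starRingEnd ℂ) (C * ∏ j, f j z) * z * (C * ((∏ j ∈ Finset.univ.erase i, f j z) * g i))
        = ((starRingEnd ℂ) C * C) * (((starRingEnd ℂ) (∏ j, f j z)) * ∏ j ∈ Finset.univ.erase i, f j z) * (z * g i) := by
          rw [map_mul]; ring
      _ = z * (starRingEnd ℂ) (f i z) * g i := by rw [hP, hCC]; ring
      _ = (((1 - Complex.normSq (a i)) / Complex.normSq (d i) : ℝ) : ℂ) := hterm i
  have hT : T = ((∑ i, (1 - Complex.normSq (a i)) / Complex.normSq (d i) : ℝ) : ℂ) := by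
    rw [hT_def, hB', hB z, Finset.mul_sum, Finset.mul_sum]
    rw [Complex.ofReal_sum]
    refine Finset.sum_congr rfl fun i hi => ?_
    exact htermfull i hi
  have hRe : (∑ i, (1 - Complex.normSq (a i)) / Complex.normSq (d i))
      ≤ ‖deriv B z‖ := by
    rw [← hTabs]
    calc (∑ i, (1 - Complex.normSq (a i)) / Complex.normSq (d i)) = T.re := by rw [hT]; simp
      _ ≤ ‖T‖ := Complex.re_le_norm T
  have hbound : ∀ i, (1 - ‖a i‖) / (1 + ‖a i‖)
      ≤ (1 - Complex.normSq (a i)) / Complex.normSq (d i) := by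
    intro i
    set r := ‖a i‖ with hr_def
    have hr0 : 0 ≤ r := norm_nonneg _
    have hr1 : r < 1 := ha i
    have hdpos : 0 < Complex.normSq (d i) := Complex.normSq_pos.mpr (hd i)
    have hdle : Complex.normSq (d i) ≤ (1 + r) ^ 2 := by
      rw [Complex.normSq_eq_norm_sq]
      have hle : ‖d i‖ ≤ 1 + r := by
        calc ‖d i‖ = ‖1 - (starRingEnd ℂ) (a i) * z‖ := rfl
          _ ≤ ‖(1:ℂ)‖ + ‖(starRingEnd ℂ) (a i) * z‖ := by
              exact norm_sub_le (1 : ℂ) ((starRingEnd ℂ) (a i) * z)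
          _ = 1 + r := by rw [norm_one, norm_mul, Complex.norm_conj, hz, mul_one]
      exact pow_le_pow_left₀ (norm_nonneg _) hle 2
    have hnum : 1 - Complex.normSq (a i) = (1 - r) * (1 + r) := by
      rw [Complex.normSq_eq_norm_sq, ← hr_def]; ring
    rw [hnum]
    have h1r : (0:ℝ) < 1 + r := by linarith
    calc (1 - r) / (1 + r) = (1 - r) * (1 + r) / (1 + r) ^ 2 := by
          field_simp
      _ ≤ (1 - r) * (1 + r) / Complex.normSq (d i) := by
          gcongr
  calc (1:ℝ) < ∑ i, (1 - ‖a i‖) / (1 + ‖a i‖) := hexp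
    _ ≤ ∑ i, (1 - Complex.normSq (a i)) / Complex.normSq (d i) :=
        Finset.sum_le_sum (fun i _ => hbound i)
    _ ≤ ‖deriv B z‖ := hRe
end

section
/- Let B(z) = C · ∏_{i=1}^n (z − a_i)/(1 − conj(a_i)·z) be a finite Blaschke product with n ≥ 2 such that |B'(z)| > 1 for all z ∈ ℂ with |z| = 1. Then B has a fixed point z₀ with |z₀| < 1, this fixed point is unique among points of the open unit disk, and it is attracting: |B'(z₀)| < 1. -/
open Complex Metric Set Finset

-- key identity
lemma key (z w : ℂ) : Complex.normSq (1 - (starRingEnd ℂ) w * z) - Complex.normSq (z - w)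
    = (1 - Complex.normSq z) * (1 - Complex.normSq w) := by
  simp [Complex.normSq_apply, Complex.sub_re, Complex.sub_im, Complex.mul_re, Complex.mul_im]
  ring

lemma denom_ne (w z : ℂ) (hw : ‖w‖ < 1) (hz : ‖z‖ ≤ 1) :
    (1 : ℂ) - (starRingEnd ℂ) w * z ≠ 0 := by
  intro h
  have h2 : (1:ℂ) = (starRingEnd ℂ) w * z := by linear_combination h
  have : ‖(starRingEnd ℂ) w * z‖ < 1 := by
    rw [norm_mul, Complex.norm_conj]
    calc ‖w‖ * ‖z‖ ≤ ‖w‖ * 1 :=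
      mul_le_mul_of_nonneg_left hz (norm_nonneg w)
    _ < 1 := by simpa using hw
  rw [← h2] at this; simp at this

lemma abs_lt_abs_of_normSq {x y : ℂ} (h : Complex.normSq x < Complex.normSq y) :
    ‖x‖ < ‖y‖ := by
  have := Real.sqrt_lt_sqrt (Complex.normSq_nonneg x) h
  simpa [Complex.norm_def] using this


lemma normSq_lt_one_of_abs {z : ℂ} (hz : ‖z‖ < 1) : Complex.normSq z < 1 := by
  have : ‖z‖ * ‖z‖ < 1 := by nlinarith [norm_nonneg z]
  simpa [← Complex.sq_norm, sq] using this

lemma mobius_lt_one {w z : ℂ} (hw : ‖w‖ < 1) (hz : ‖z‖ < 1) :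
    ‖(z - w) / (1 - (starRingEnd ℂ) w * z)‖ < 1 := by
  have hd := denom_ne w z hw hz.le
  have hdpos : 0 < ‖1 - (starRingEnd ℂ) w * z‖ := by
    simpa [norm_pos_iff] using hd
  rw [norm_div, div_lt_one hdpos]
  apply abs_lt_abs_of_normSq
  nlinarith [key z w, normSq_lt_one_of_abs hz, normSq_lt_one_of_abs hw]

lemma abs_eq_abs_of_unit {z w : ℂ} (hz : ‖z‖ = 1) :
    ‖1 - (starRingEnd ℂ) w * z‖ = ‖z - w‖ := by
  have h1 : Complex.normSq z = 1 := by
    have : ‖z‖ * ‖z‖ = 1 := by rw [hz]; ring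
    simpa [← Complex.sq_norm, sq] using this
  have := key z w
  rw [h1] at this
  simp only [sub_self, zero_mul] at this
  have h2 : Complex.normSq (1 - (starRingEnd ℂ) w * z) = Complex.normSq (z - w) := by linarith
  rw [Complex.norm_def, Complex.norm_def, h2]

lemma conj_self_ne {w : ℂ} (hw : ‖w‖ < 1) : (1 : ℂ) - (starRingEnd ℂ) w * w ≠ 0 := by
  intro h
  have h2 : (starRingEnd ℂ) w * w = 1 := by linear_combination -h
  have h3 := congrArg (‖·‖) h2
  rw [norm_mul, Complex.norm_conj, norm_one] at h3
  nlinarith [norm_nonneg w]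

lemma mobius_comp {w z : ℂ} (hw : ‖w‖ < 1) (hz : ‖z‖ < 1) :
    ((z - w) / (1 - (starRingEnd ℂ) w * z) + w) /
      (1 + (starRingEnd ℂ) w * ((z - w) / (1 - (starRingEnd ℂ) w * z))) = z := by
  have hd := denom_ne w z hw hz.le
  have hu := mobius_lt_one hw hz
  have hd2 : (1 : ℂ) + (starRingEnd ℂ) w * ((z - w) / (1 - (starRingEnd ℂ) w * z)) ≠ 0 := by
    intro h
    have h2 : ‖(starRingEnd ℂ) w * ((z - w) / (1 - (starRingEnd ℂ) w * z))‖ < 1 := by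
      rw [norm_mul, Complex.norm_conj]
      nlinarith [norm_nonneg w, norm_nonneg ((z - w) / (1 - (starRingEnd ℂ) w * z))]
    have h3 : (starRingEnd ℂ) w * ((z - w) / (1 - (starRingEnd ℂ) w * z)) = -1 := by
      linear_combination h
    rw [h3] at h2; simp at h2
  have h3 := conj_self_ne hw
  have h4 : (1 : ℂ) - w * (starRingEnd ℂ) w ≠ 0 := by
    intro h; apply h3; linear_combination h
  rw [div_eq_iff hd2]
  have hd' : (1:ℂ) - z * (starRingEnd ℂ) w ≠ 0 := by rwa [mul_comm]
  field_simp
  ring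

lemma mobius_hasDeriv {w z : ℂ} (hd : (1:ℂ) - (starRingEnd ℂ) w * z ≠ 0) :
    HasDerivAt (fun z => (z - w) / (1 - (starRingEnd ℂ) w * z))
      ((1 - (starRingEnd ℂ) w * w) / (1 - (starRingEnd ℂ) w * z)^2) z := by
  have h := (((hasDerivAt_id z).sub_const w).fun_div
    (((hasDerivAt_id z).const_mul ((starRingEnd ℂ) w)).const_sub 1) hd)
  refine h.congr_deriv ?_
  simp only [id]
  ring

lemma mobius_inj {w u₁ u₂ : ℂ} (hw : ‖w‖ < 1) (h1 : ‖u₁‖ < 1)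
    (h2 : ‖u₂‖ < 1)
    (h : (u₁ - w) / (1 - (starRingEnd ℂ) w * u₁) = (u₂ - w) / (1 - (starRingEnd ℂ) w * u₂)) :
    u₁ = u₂ := by
  have d1 := denom_ne w u₁ hw h1.le
  have d2 := denom_ne w u₂ hw h2.le
  rw [div_eq_div_iff d1 d2] at h
  have h5 : (u₁ - u₂) * (1 - (starRingEnd ℂ) w * w) = 0 := by linear_combination h
  rcases mul_eq_zero.1 h5 with h6 | h6
  · exact sub_eq_zero.1 h6
  · exact absurd h6 (conj_self_ne hw)

-- telescope
lemma telescope (m : ℕ) (x : ℕ → ℝ) :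
    1 - ∏ k ∈ Finset.range m, x k
      = ∑ k ∈ Finset.range m, (1 - x k) * ∏ j ∈ Finset.range k, x j := by
  induction m with
  | zero => simp
  | succ m ih =>
    rw [Finset.prod_range_succ, Finset.sum_range_succ, ← ih]
    ring

noncomputable def Bfun (m : ℕ) (A : ℕ → ℂ) (C : ℂ) : ℂ → ℂ :=
  fun z => C * ∏ k ∈ Finset.range m, (z - A k) / (1 - (starRingEnd ℂ) (A k) * z)

noncomputable def Rfun (m : ℕ) (A : ℕ → ℂ) : ℂ → ℝ :=
  fun z => ∑ k ∈ Finset.range m, ((1 - Complex.normSq (A k)) /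
      ‖1 - (starRingEnd ℂ) (A k) * z‖ ^ 2) *
    ∏ j ∈ Finset.range k, ‖(z - A j) / (1 - (starRingEnd ℂ) (A j) * z)‖ ^ 2

lemma Bfun_abs_lt {m : ℕ} {A : ℕ → ℂ} {C : ℂ} (hm : 1 ≤ m) (hA : ∀ k, ‖A k‖ < 1)
    (hC : ‖C‖ = 1) {z : ℂ} (hz : ‖z‖ < 1) :
    ‖Bfun m A C z‖ < 1 := by
  obtain ⟨m', rfl⟩ : ∃ m', m = m' + 1 := ⟨m - 1, (Nat.succ_pred_eq_of_pos hm).symm⟩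
  rw [Bfun, norm_mul, hC, one_mul, norm_prod, Finset.prod_range_succ']
  have h1 : ∏ i ∈ Finset.range m', ‖(z - A (i+1)) / (1 - (starRingEnd ℂ) (A (i+1)) * z)‖ ≤ 1 := by
    apply Finset.prod_le_one
    · intro i _; exact norm_nonneg _
    · intro i _; exact (mobius_lt_one (hA (i+1)) hz).le
  have h2 := mobius_lt_one (hA 0) hz
  nlinarith [norm_nonneg ((z - A 0) / (1 - (starRingEnd ℂ) (A 0) * z)),
    Finset.prod_nonneg (fun i (_ : i ∈ Finset.range m') =>
      norm_nonneg ((z - A (i+1)) / (1 - (starRingEnd ℂ) (A (i+1)) * z)))]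

lemma Bfun_hasDerivAt {m : ℕ} {A : ℕ → ℂ} {C : ℂ} {z : ℂ}
    (hz : ∀ k, (1:ℂ) - (starRingEnd ℂ) (A k) * z ≠ 0) :
    HasDerivAt (Bfun m A C)
      (C * ∑ k ∈ Finset.range m,
        (∏ j ∈ (Finset.range m).erase k, (z - A j) / (1 - (starRingEnd ℂ) (A j) * z)) *
          ((1 - (starRingEnd ℂ) (A k) * A k) / (1 - (starRingEnd ℂ) (A k) * z)^2)) z := by
  have h := HasDerivAt.fun_finsetProd (u := Finset.range m)
    (f := fun k => fun z => (z - A k) / (1 - (starRingEnd ℂ) (A k) * z))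
    (f' := fun k => (1 - (starRingEnd ℂ) (A k) * A k) / (1 - (starRingEnd ℂ) (A k) * z)^2)
    (fun k _ => mobius_hasDeriv (hz k))
  have h2 := h.const_mul C
  simp only [smul_eq_mul] at h2
  exact h2

lemma Bfun_differentiableAt {m : ℕ} {A : ℕ → ℂ} {C : ℂ} {z : ℂ}
    (hz : ∀ k, (1:ℂ) - (starRingEnd ℂ) (A k) * z ≠ 0) :
    DifferentiableAt ℂ (Bfun m A C) z := (Bfun_hasDerivAt hz).differentiableAt

lemma mob_abs_one {w ζ : ℂ} (hw : ‖w‖ < 1) (hζ : ‖ζ‖ = 1) :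
    ‖(ζ - w) / (1 - (starRingEnd ℂ) w * ζ)‖ = 1 := by
  rw [norm_div, abs_eq_abs_of_unit hζ, div_self]
  have : ζ - w ≠ 0 := by
    intro h
    have : ζ = w := by linear_combination h
    rw [this] at hζ; rw [hζ] at hw; exact lt_irrefl 1 hw
  simpa [norm_ne_zero_iff] using this

lemma conj_mul_self (w : ℂ) : (starRingEnd ℂ) w * w = (Complex.normSq w : ℂ) := by
  rw [mul_comm, Complex.mul_conj]

lemma Bfun_deriv_bound {m : ℕ} {A : ℕ → ℂ} {C : ℂ} (hA : ∀ k, ‖A k‖ < 1)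
    (hC : ‖C‖ = 1) {ζ : ℂ} (hζ : ‖ζ‖ = 1) :
    ‖deriv (Bfun m A C) ζ‖ ≤ Rfun m A ζ := by
  have hd : ∀ k, (1:ℂ) - (starRingEnd ℂ) (A k) * ζ ≠ 0 := fun k => denom_ne _ _ (hA k) hζ.le
  rw [(Bfun_hasDerivAt hd).deriv, norm_mul, hC, one_mul]
  refine le_trans (norm_sum_le _ _) ?_
  rw [Rfun]
  apply Finset.sum_le_sum
  intro k hk
  rw [norm_mul]
  have h1 : ‖∏ j ∈ (Finset.range m).erase k,
      (ζ - A j) / (1 - (starRingEnd ℂ) (A j) * ζ)‖ = 1 := by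
    rw [norm_prod]
    apply Finset.prod_eq_one
    intro j _
    exact mob_abs_one (hA j) hζ
  have h2 : ∏ j ∈ Finset.range k, ‖(ζ - A j) / (1 - (starRingEnd ℂ) (A j) * ζ)‖ ^ 2
      = 1 := by
    apply Finset.prod_eq_one
    intro j _
    rw [mob_abs_one (hA j) hζ]; norm_num
  rw [h1, one_mul, h2, mul_one, norm_div, norm_pow, conj_mul_self]
  have h3 : ‖1 - (Complex.normSq (A k) : ℂ)‖ = 1 - Complex.normSq (A k) := by
    rw [show ((1:ℂ) - (Complex.normSq (A k) : ℂ)) = ((1 - Complex.normSq (A k) : ℝ) : ℂ) by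
      push_cast; ring]
    rw [Complex.norm_real, Real.norm_eq_abs]
    exact abs_of_nonneg (by nlinarith [normSq_lt_one_of_abs (hA k)])
  rw [h3]

lemma Bfun_R_identity {m : ℕ} {A : ℕ → ℂ} {C : ℂ} (hC : ‖C‖ = 1) {z : ℂ}
    (hd : ∀ k, (1:ℂ) - (starRingEnd ℂ) (A k) * z ≠ 0) :
    1 - ‖Bfun m A C z‖ ^ 2 = Rfun m A z * (1 - ‖z‖ ^ 2) := by
  have habs2 : ‖Bfun m A C z‖ ^ 2
      = ∏ k ∈ Finset.range m, ‖(z - A k) / (1 - (starRingEnd ℂ) (A k) * z)‖ ^ 2 := by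
    rw [Bfun, norm_mul, hC, one_mul, norm_prod, ← Finset.prod_pow]
  rw [habs2, telescope, Rfun, Finset.sum_mul]
  apply Finset.sum_congr rfl
  intro k _
  have hne : Complex.normSq (1 - (starRingEnd ℂ) (A k) * z) ≠ 0 := by
    simpa [Complex.normSq_eq_zero] using hd k
  have h1 : ‖(z - A k) / (1 - (starRingEnd ℂ) (A k) * z)‖ ^ 2
      = Complex.normSq (z - A k) / Complex.normSq (1 - (starRingEnd ℂ) (A k) * z) := by
    rw [norm_div, div_pow, Complex.sq_norm, Complex.sq_norm]
  have h2 : ‖1 - (starRingEnd ℂ) (A k) * z‖ ^ 2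
      = Complex.normSq (1 - (starRingEnd ℂ) (A k) * z) := Complex.sq_norm _
  have h3 : ‖z‖ ^ 2 = Complex.normSq z := Complex.sq_norm z
  rw [h1, h2, h3]
  have hkey := key z (A k)
  have hfac : 1 - Complex.normSq (z - A k) / Complex.normSq (1 - (starRingEnd ℂ) (A k) * z)
      = (1 - Complex.normSq (A k)) / Complex.normSq (1 - (starRingEnd ℂ) (A k) * z)
        * (1 - Complex.normSq z) := by
    rw [div_mul_eq_mul_div, eq_div_iff hne, sub_mul, div_mul_cancel₀ _ hne]
    linear_combination hkey
  rw [hfac]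
  ring

lemma mobius_comp' {w z : ℂ} (hw : ‖w‖ < 1) (hz : ‖z‖ < 1) :
    ((z - w) / (1 - (starRingEnd ℂ) w * z) - -w) /
      (1 - (starRingEnd ℂ) (-w) * ((z - w) / (1 - (starRingEnd ℂ) w * z))) = z := by
  have := mobius_comp hw hz
  simpa [sub_neg_eq_add, map_neg, neg_mul, sub_neg_eq_add] using this

-- the conjugated map g
section SP

variable {f : ℂ → ℂ}

lemma g_maps (hmaps : Set.MapsTo f (ball (0:ℂ) 1) (ball (0:ℂ) 1)) {y : ℂ}
    (hy : ‖y‖ < 1) {ζ : ℂ} (hζ : ‖ζ‖ < 1) :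
    ‖(f ((ζ - -y) / (1 - (starRingEnd ℂ) (-y) * ζ)) - f y) /
      (1 - (starRingEnd ℂ) (f y) * f ((ζ - -y) / (1 - (starRingEnd ℂ) (-y) * ζ)))‖ < 1 := by
  have hy' : ‖-y‖ < 1 := by simpa using hy
  have hu : ‖(ζ - -y) / (1 - (starRingEnd ℂ) (-y) * ζ)‖ < 1 := mobius_lt_one hy' hζ
  have hfu : ‖f ((ζ - -y) / (1 - (starRingEnd ℂ) (-y) * ζ))‖ < 1 := by
    simpa [mem_ball, Complex.dist_eq] using
      hmaps (by simpa [mem_ball, Complex.dist_eq] using hu)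
  have hfy : ‖f y‖ < 1 := by
    simpa [mem_ball, Complex.dist_eq] using hmaps (by simpa [mem_ball, Complex.dist_eq] using hy)
  exact mobius_lt_one hfy hfu

lemma mem_ball_iff_abs {z : ℂ} : z ∈ ball (0:ℂ) 1 ↔ ‖z‖ < 1 := by
  simp [mem_ball, Complex.dist_eq]

lemma g_diff (hdiff : DifferentiableOn ℂ f (ball (0:ℂ) 1))
    (hmaps : Set.MapsTo f (ball (0:ℂ) 1) (ball (0:ℂ) 1)) {y : ℂ}
    (hy : ‖y‖ < 1) :
    DifferentiableOn ℂ (fun ζ => (f ((ζ - -y) / (1 - (starRingEnd ℂ) (-y) * ζ)) - f y) /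
      (1 - (starRingEnd ℂ) (f y) * f ((ζ - -y) / (1 - (starRingEnd ℂ) (-y) * ζ))))
      (ball (0:ℂ) 1) := by
  intro ζ hζ
  rw [mem_ball_iff_abs] at hζ
  have hy' : ‖-y‖ < 1 := by simpa using hy
  have hu : ‖(ζ - -y) / (1 - (starRingEnd ℂ) (-y) * ζ)‖ < 1 := mobius_lt_one hy' hζ
  have hfy : ‖f y‖ < 1 := by
    simpa [mem_ball, Complex.dist_eq] using hmaps (by simpa [mem_ball, Complex.dist_eq] using hy)
  have hfu : ‖f ((ζ - -y) / (1 - (starRingEnd ℂ) (-y) * ζ))‖ < 1 := by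
    simpa [mem_ball, Complex.dist_eq] using
      hmaps (by simpa [mem_ball, Complex.dist_eq] using hu)
  have h1 : DifferentiableAt ℂ (fun ζ : ℂ => (ζ - -y) / (1 - (starRingEnd ℂ) (-y) * ζ)) ζ :=
    (mobius_hasDeriv (denom_ne _ _ hy' hζ.le)).differentiableAt
  have h2 : DifferentiableAt ℂ f ((ζ - -y) / (1 - (starRingEnd ℂ) (-y) * ζ)) :=
    hdiff.differentiableAt (isOpen_ball.mem_nhds (mem_ball_iff_abs.2 hu))
  have h3 : DifferentiableAt ℂ (f ∘ fun ζ : ℂ => (ζ - -y) / (1 - (starRingEnd ℂ) (-y) * ζ)) ζ :=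
    h2.comp ζ h1
  apply DifferentiableAt.differentiableWithinAt
  apply DifferentiableAt.div
  · exact h3.sub_const (f y)
  · exact (h3.const_mul _).const_sub 1
  · exact denom_ne _ _ hfy hfu.le
end SP

section SP2
variable {f : ℂ → ℂ}

lemma g_zero {y : ℂ} (hy : ‖y‖ < 1)
    (hd : (1 : ℂ) - (starRingEnd ℂ) (f y) * f y ≠ 0) :
    (f ((0 - -y) / (1 - (starRingEnd ℂ) (-y) * 0)) - f y) /
      (1 - (starRingEnd ℂ) (f y) * f ((0 - -y) / (1 - (starRingEnd ℂ) (-y) * 0))) = 0 := by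
  have h0 : ((0:ℂ) - -y) / (1 - (starRingEnd ℂ) (-y) * 0) = y := by
    simp
  rw [h0, sub_self, zero_div]

lemma SP_main (hdiff : DifferentiableOn ℂ f (ball (0:ℂ) 1))
    (hmaps : Set.MapsTo f (ball (0:ℂ) 1) (ball (0:ℂ) 1)) {x y : ℂ}
    (hx : ‖x‖ < 1) (hy : ‖y‖ < 1) (hne : x ≠ y) :
    ‖(f x - f y) / (1 - (starRingEnd ℂ) (f y) * f x)‖ ≤
      ‖(x - y) / (1 - (starRingEnd ℂ) y * x)‖ ∧
    (‖(f x - f y) / (1 - (starRingEnd ℂ) (f y) * f x)‖ =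
        ‖(x - y) / (1 - (starRingEnd ℂ) y * x)‖ →
      ∃ c : ℂ, ‖c‖ = 1 ∧ ∀ w : ℂ, ‖w‖ < 1 →
        f w = (c * ((w - y) / (1 - (starRingEnd ℂ) y * w)) - -(f y)) /
          (1 - (starRingEnd ℂ) (-(f y)) * (c * ((w - y) / (1 - (starRingEnd ℂ) y * w))))) := by
  set g : ℂ → ℂ := fun ζ => (f ((ζ - -y) / (1 - (starRingEnd ℂ) (-y) * ζ)) - f y) /
      (1 - (starRingEnd ℂ) (f y) * f ((ζ - -y) / (1 - (starRingEnd ℂ) (-y) * ζ))) with hg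
  have hfy : ‖f y‖ < 1 := by
    simpa [mem_ball, Complex.dist_eq] using hmaps (by simpa [mem_ball, Complex.dist_eq] using hy)
  have hg0 : g 0 = 0 := g_zero hy (denom_ne _ _ hfy hfy.le)
  have hgd : DifferentiableOn ℂ g (ball (0:ℂ) 1) := g_diff hdiff hmaps hy
  have hgm : Set.MapsTo g (ball (0:ℂ) 1) (ball (g 0) 1) := by
    rw [hg0]
    intro ζ hζ
    rw [mem_ball_iff_abs] at hζ ⊢
    exact g_maps hmaps hy hζ
  set ζ₀ : ℂ := (x - y) / (1 - (starRingEnd ℂ) y * x) with hζ₀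
  have hζ₀lt : ‖ζ₀‖ < 1 := mobius_lt_one hy hx
  have hζ₀ne : ζ₀ ≠ 0 := by
    rw [hζ₀, div_ne_zero_iff]
    exact ⟨sub_ne_zero.2 hne, denom_ne _ _ hy hx.le⟩
  have hgζ₀ : g ζ₀ = (f x - f y) / (1 - (starRingEnd ℂ) (f y) * f x) := by
    rw [hg]
    simp only
    rw [mobius_comp' hy hx]
  have hds := Complex.norm_dslope_le_div_of_mapsTo_ball hgd (hgm.mono_right ball_subset_closedBall) (mem_ball_iff_abs.2 hζ₀lt)
  rw [dslope_of_ne _ hζ₀ne, slope_def_field, hg0, sub_zero, sub_zero] at hds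
  have habs : ‖g ζ₀‖ / ‖ζ₀‖ ≤ 1 := by
    simpa [norm_div] using hds
  have hζ₀pos : 0 < ‖ζ₀‖ := by
    simpa [norm_pos_iff] using hζ₀ne
  constructor
  · rw [← hgζ₀]
    rw [div_le_one hζ₀pos] at habs
    exact habs
  · intro heq
    have heq1 : ‖dslope g 0 ζ₀‖ = 1 / 1 := by
      rw [dslope_of_ne _ hζ₀ne, slope_def_field, hg0, sub_zero, sub_zero]
      rw [← hgζ₀] at heq
      simp [norm_div, heq, div_self hζ₀pos.ne']
    have haff := Complex.affine_of_mapsTo_ball_of_exists_norm_dslope_eq_div hgd (hgm.mono_right ball_subset_closedBall)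
      (mem_ball_iff_abs.2 hζ₀lt) heq1
    set c : ℂ := dslope g 0 ζ₀ with hc
    have hcabs : ‖c‖ = 1 := by
      have := heq1; simpa [] using this
    refine ⟨c, hcabs, ?_⟩
    intro w hw
    have hζw : ‖(w - y) / (1 - (starRingEnd ℂ) y * w)‖ < 1 := mobius_lt_one hy hw
    have := haff (mem_ball_iff_abs.2 hζw)
    simp only [hg0, smul_eq_mul, sub_zero, zero_add] at this
    -- this : g ζw = ζw * c
    rw [hg] at this
    simp only at this
    rw [mobius_comp' hy hw] at this
    -- this : (f w - f y) / (1 - conj (f y) f w) = ζw * c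
    have hfw : ‖f w‖ < 1 := by
      simpa [mem_ball, Complex.dist_eq] using hmaps (by simpa [mem_ball, Complex.dist_eq] using hw)
    have hcomp := mobius_comp' hfy hfw
    rw [this] at hcomp
    rw [← hcomp]
    ring_nf

lemma SP_fixed (hdiff : DifferentiableOn ℂ f (ball (0:ℂ) 1))
    (hmaps : Set.MapsTo f (ball (0:ℂ) 1) (ball (0:ℂ) 1)) {p : ℂ}
    (hp : ‖p‖ < 1) (hfix : f p = p) :
    ‖deriv f p‖ ≤ 1 ∧
    (‖deriv f p‖ = 1 →
      ∃ c : ℂ, ‖c‖ = 1 ∧ ∀ w : ℂ, ‖w‖ < 1 →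
        f w = (c * ((w - p) / (1 - (starRingEnd ℂ) p * w)) - -p) /
          (1 - (starRingEnd ℂ) (-p) * (c * ((w - p) / (1 - (starRingEnd ℂ) p * w))))) := by
  set g : ℂ → ℂ := fun ζ => (f ((ζ - -p) / (1 - (starRingEnd ℂ) (-p) * ζ)) - f p) /
      (1 - (starRingEnd ℂ) (f p) * f ((ζ - -p) / (1 - (starRingEnd ℂ) (-p) * ζ))) with hg
  have hfp : ‖f p‖ < 1 := by rw [hfix]; exact hp
  have hg0 : g 0 = 0 := g_zero hp (denom_ne _ _ hfp hfp.le)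
  have hgd : DifferentiableOn ℂ g (ball (0:ℂ) 1) := g_diff hdiff hmaps hp
  have hgm : Set.MapsTo g (ball (0:ℂ) 1) (ball (g 0) 1) := by
    rw [hg0]
    intro ζ hζ
    rw [mem_ball_iff_abs] at hζ ⊢
    exact g_maps hmaps hp hζ
  have hp' : ‖-p‖ < 1 := by simpa using hp
  -- chain rule: deriv g 0 = deriv f p
  have hcsne := conj_self_ne hp
  have hd0 : (1:ℂ) - (starRingEnd ℂ) (-p) * (0:ℂ) ≠ 0 := by simp
  have h0p : ((0:ℂ) - -p) / (1 - (starRingEnd ℂ) (-p) * 0) = p := by simp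
  have hinner : HasDerivAt (fun ζ : ℂ => (ζ - -p) / (1 - (starRingEnd ℂ) (-p) * ζ))
      ((1 - (starRingEnd ℂ) (-p) * (-p)) / (1 - (starRingEnd ℂ) (-p) * 0) ^ 2) 0 :=
    mobius_hasDeriv hd0
  have hfd : HasDerivAt f (deriv f p) p :=
    (hdiff.differentiableAt (isOpen_ball.mem_nhds (mem_ball_iff_abs.2 hp))).hasDerivAt
  have hfd0 : HasDerivAt (fun ζ : ℂ => f ((ζ - -p) / (1 - (starRingEnd ℂ) (-p) * ζ)))
      (deriv f p * ((1 - (starRingEnd ℂ) (-p) * (-p)) / (1 - (starRingEnd ℂ) (-p) * 0) ^ 2)) 0 := by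
    have hfd' : HasDerivAt f (deriv f p) (((0:ℂ) - -p) / (1 - (starRingEnd ℂ) (-p) * 0)) := by
      rw [h0p]; exact hfd
    exact HasDerivAt.comp (0:ℂ) hfd' hinner
  have houter : HasDerivAt (fun v : ℂ => (v - f p) / (1 - (starRingEnd ℂ) (f p) * v))
      ((1 - (starRingEnd ℂ) (f p) * (f p)) /
        (1 - (starRingEnd ℂ) (f p) * f (((0:ℂ) - -p) / (1 - (starRingEnd ℂ) (-p) * 0))) ^ 2)
      (f (((0:ℂ) - -p) / (1 - (starRingEnd ℂ) (-p) * 0))) := by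
    apply mobius_hasDeriv
    rw [h0p, hfix]
    exact denom_ne _ _ hp hp.le
  have hgderiv : HasDerivAt g
      (((1 - (starRingEnd ℂ) (f p) * (f p)) /
        (1 - (starRingEnd ℂ) (f p) * f (((0:ℂ) - -p) / (1 - (starRingEnd ℂ) (-p) * 0))) ^ 2) *
        (deriv f p * ((1 - (starRingEnd ℂ) (-p) * (-p)) / (1 - (starRingEnd ℂ) (-p) * 0) ^ 2))) 0 := by
    exact HasDerivAt.comp (0:ℂ) houter hfd0
  have hval : ((1 - (starRingEnd ℂ) (f p) * (f p)) /
        (1 - (starRingEnd ℂ) (f p) * f (((0:ℂ) - -p) / (1 - (starRingEnd ℂ) (-p) * 0))) ^ 2) *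
        (deriv f p * ((1 - (starRingEnd ℂ) (-p) * (-p)) / (1 - (starRingEnd ℂ) (-p) * 0) ^ 2))
      = deriv f p := by
    rw [h0p, hfix]
    have : (starRingEnd ℂ) (-p) * (-p) = (starRingEnd ℂ) p * p := by simp
    rw [this]
    field_simp
    ring
  rw [hval] at hgderiv
  have hds := Complex.norm_dslope_le_div_of_mapsTo_ball hgd (hgm.mono_right ball_subset_closedBall) (mem_ball_iff_abs.2
    (show ‖(0:ℂ)‖ < 1 by simp))
  rw [dslope_same] at hds
  have hgd0 : deriv g 0 = deriv f p := hgderiv.deriv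
  constructor
  · rw [← hgd0]; simpa [] using hds
  · intro heq
    have heq1 : ‖dslope g 0 0‖ = 1 / 1 := by
      rw [dslope_same, hgd0]; simpa [] using heq
    have haff := Complex.affine_of_mapsTo_ball_of_exists_norm_dslope_eq_div hgd (hgm.mono_right ball_subset_closedBall)
      (mem_ball_iff_abs.2 (show ‖(0:ℂ)‖ < 1 by simp)) heq1
    set c : ℂ := dslope g 0 0 with hc
    have hcabs : ‖c‖ = 1 := by simpa [] using heq1
    refine ⟨c, hcabs, ?_⟩
    intro w hw
    have hζw : ‖(w - p) / (1 - (starRingEnd ℂ) p * w)‖ < 1 := mobius_lt_one hp hw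
    have := haff (mem_ball_iff_abs.2 hζw)
    simp only [hg0, smul_eq_mul, sub_zero, zero_add] at this
    rw [hg] at this
    simp only at this
    rw [mobius_comp' hp hw] at this
    have hfw : ‖f w‖ < 1 := by
      simpa [mem_ball, Complex.dist_eq] using hmaps (by simpa [mem_ball, Complex.dist_eq] using hw)
    have hcomp := mobius_comp' hfp hfw
    rw [this] at hcomp
    rw [← hcomp, hfix]
    ring_nf
end SP2

lemma EC {m : ℕ} {A : ℕ → ℂ} {C : ℂ} (hm : 2 ≤ m) (hA : ∀ k, ‖A k‖ < 1)
    (hexp' : ∀ ζ : ℂ, ‖ζ‖ = 1 → 1 < ‖deriv (Bfun m A C) ζ‖)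
    {p q c : ℂ} (hp : ‖p‖ < 1) (hq : ‖q‖ < 1) (hc : ‖c‖ = 1)
    (hform : ∀ w : ℂ, ‖w‖ < 1 →
      Bfun m A C w = (c * ((w - p) / (1 - (starRingEnd ℂ) p * w)) - -q) /
        (1 - (starRingEnd ℂ) (-q) * (c * ((w - p) / (1 - (starRingEnd ℂ) p * w))))) : False := by
  have hq' : ‖-q‖ < 1 := by simpa using hq
  have hcne : c ≠ 0 := by
    intro h; rw [h] at hc; simp at hc
  -- injectivity
  have hinj : ∀ x y : ℂ, ‖x‖ < 1 → ‖y‖ < 1 →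
      Bfun m A C x = Bfun m A C y → x = y := by
    intro x y hx hy hBxy
    rw [hform x hx, hform y hy] at hBxy
    have hu1 : ‖c * ((x - p) / (1 - (starRingEnd ℂ) p * x))‖ < 1 := by
      rw [norm_mul, hc, one_mul]; exact mobius_lt_one hp hx
    have hu2 : ‖c * ((y - p) / (1 - (starRingEnd ℂ) p * y))‖ < 1 := by
      rw [norm_mul, hc, one_mul]; exact mobius_lt_one hp hy
    have h1 := mobius_inj hq' hu1 hu2 hBxy
    have h2 : (x - p) / (1 - (starRingEnd ℂ) p * x) = (y - p) / (1 - (starRingEnd ℂ) p * y) :=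
      mul_left_cancel₀ hcne h1
    exact mobius_inj hp hx hy h2
  -- all zeros equal
  have hzero : ∀ k, k < m → Bfun m A C (A k) = 0 := by
    intro k hk
    rw [Bfun]
    rw [Finset.prod_eq_zero (Finset.mem_range.2 hk) (by rw [sub_self, zero_div])]
    rw [mul_zero]
  have hall : ∀ k, k < m → A k = A 0 := by
    intro k hk
    exact hinj _ _ (hA k) (hA 0) (by rw [hzero k hk, hzero 0 (by omega)])
  set α := A 0 with hα
  have hBpow : Bfun m A C = fun z => C * ((z - α) / (1 - (starRingEnd ℂ) α * z)) ^ m := by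
    funext z
    rw [Bfun, Finset.prod_congr rfl (fun k hk => by rw [hall k (Finset.mem_range.1 hk)]),
      Finset.prod_const, Finset.card_range]
  -- deriv at α is zero
  have hdα : (1:ℂ) - (starRingEnd ℂ) α * α ≠ 0 := conj_self_ne (hA 0)
  have hder : HasDerivAt (Bfun m A C) (C * ((m : ℂ) * ((α - α) / (1 - (starRingEnd ℂ) α * α)) ^ (m - 1) *
      ((1 - (starRingEnd ℂ) α * α) / (1 - (starRingEnd ℂ) α * α) ^ 2))) α := by
    rw [hBpow]
    exact (((mobius_hasDeriv hdα).pow m)).const_mul C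
  have hder0 : deriv (Bfun m A C) α = 0 := by
    rw [hder.deriv, sub_self, zero_div, zero_pow (by omega : m - 1 ≠ 0)]
    ring
  -- deriv at α nonzero via formula
  have hpα : (1:ℂ) - (starRingEnd ℂ) p * α ≠ 0 := denom_ne _ _ hp (hA 0).le
  have hv0 : ‖c * ((α - p) / (1 - (starRingEnd ℂ) p * α))‖ < 1 := by
    rw [norm_mul, hc, one_mul]; exact mobius_lt_one hp (hA 0)
  have hdv : (1:ℂ) - (starRingEnd ℂ) (-q) * (c * ((α - p) / (1 - (starRingEnd ℂ) p * α))) ≠ 0 :=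
    denom_ne _ _ hq' hv0.le
  have hinner2 : HasDerivAt (fun w : ℂ => c * ((w - p) / (1 - (starRingEnd ℂ) p * w)))
      (c * ((1 - (starRingEnd ℂ) p * p) / (1 - (starRingEnd ℂ) p * α) ^ 2)) α :=
    (mobius_hasDeriv hpα).const_mul c
  have houter2 : HasDerivAt (fun v : ℂ => (v - -q) / (1 - (starRingEnd ℂ) (-q) * v))
      ((1 - (starRingEnd ℂ) (-q) * (-q)) /
        (1 - (starRingEnd ℂ) (-q) * (c * ((α - p) / (1 - (starRingEnd ℂ) p * α)))) ^ 2)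
      (c * ((α - p) / (1 - (starRingEnd ℂ) p * α))) := mobius_hasDeriv hdv
  have hFder : HasDerivAt (fun w : ℂ => (c * ((w - p) / (1 - (starRingEnd ℂ) p * w)) - -q) /
        (1 - (starRingEnd ℂ) (-q) * (c * ((w - p) / (1 - (starRingEnd ℂ) p * w)))))
      (((1 - (starRingEnd ℂ) (-q) * (-q)) /
        (1 - (starRingEnd ℂ) (-q) * (c * ((α - p) / (1 - (starRingEnd ℂ) p * α)))) ^ 2) *
        (c * ((1 - (starRingEnd ℂ) p * p) / (1 - (starRingEnd ℂ) p * α) ^ 2))) α :=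
    by have := HasDerivAt.comp α houter2 hinner2; exact this
  have hev : deriv (Bfun m A C) α = ((1 - (starRingEnd ℂ) (-q) * (-q)) /
        (1 - (starRingEnd ℂ) (-q) * (c * ((α - p) / (1 - (starRingEnd ℂ) p * α)))) ^ 2) *
        (c * ((1 - (starRingEnd ℂ) p * p) / (1 - (starRingEnd ℂ) p * α) ^ 2)) := by
    have hEq : Set.EqOn (Bfun m A C) (fun w : ℂ => (c * ((w - p) / (1 - (starRingEnd ℂ) p * w)) - -q) /
        (1 - (starRingEnd ℂ) (-q) * (c * ((w - p) / (1 - (starRingEnd ℂ) p * w)))))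
        (ball (0:ℂ) 1) := fun w hw => hform w (mem_ball_iff_abs.1 hw)
    have hEv : (Bfun m A C) =ᶠ[nhds α] (fun w : ℂ => (c * ((w - p) / (1 - (starRingEnd ℂ) p * w)) - -q) /
        (1 - (starRingEnd ℂ) (-q) * (c * ((w - p) / (1 - (starRingEnd ℂ) p * w))))) :=
      Filter.eventuallyEq_of_mem (isOpen_ball.mem_nhds (mem_ball_iff_abs.2 (hA 0))) hEq
    rw [hEv.deriv_eq, hFder.deriv]
  rw [hder0] at hev
  have hqq : (1:ℂ) - (starRingEnd ℂ) (-q) * (-q) ≠ 0 := conj_self_ne hq'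
  have := hev.symm
  rcases mul_eq_zero.1 this with h | h
  · exact (div_ne_zero hqq (pow_ne_zero 2 hdv)) h
  · rcases mul_eq_zero.1 h with h' | h'
    · exact hcne h'
    · exact (div_ne_zero (conj_self_ne hp) (pow_ne_zero 2 hpα)) h'

lemma Rfun_contOn {m : ℕ} {A : ℕ → ℂ} (hA : ∀ k, ‖A k‖ < 1) :
    ContinuousOn (Rfun m A) (closedBall (0:ℂ) 1) := by
  apply continuousOn_finset_sum
  intro k _
  apply ContinuousOn.mul
  · apply ContinuousOn.div continuousOn_const
    · exact ((continuous_norm.comp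
        (continuous_const.sub (continuous_const.mul continuous_id))).pow 2).continuousOn
    · intro z hz
      have hzle : ‖z‖ ≤ 1 := by
        simpa [Complex.dist_eq] using (mem_closedBall.1 hz)
      exact pow_ne_zero 2 (by simpa [norm_ne_zero_iff] using denom_ne (A k) z (hA k) hzle)
  · apply continuousOn_finset_prod
    intro j _
    apply ContinuousOn.pow
    apply continuous_norm.comp_continuousOn
    apply ContinuousOn.div
    · exact (continuous_id.sub continuous_const).continuousOn
    · exact (continuous_const.sub (continuous_const.mul continuous_id)).continuousOn
    · intro z hz
      have hzle : ‖z‖ ≤ 1 := by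
        simpa [Complex.dist_eq] using (mem_closedBall.1 hz)
      exact denom_ne (A j) z (hA j) hzle

lemma exists_radius {m : ℕ} {A : ℕ → ℂ} {C : ℂ} (hA : ∀ k, ‖A k‖ < 1)
    (hC : ‖C‖ = 1)
    (hexp' : ∀ ζ : ℂ, ‖ζ‖ = 1 → 1 < ‖deriv (Bfun m A C) ζ‖) :
    ∃ r : ℝ, 1/2 ≤ r ∧ r < 1 ∧ ∀ z : ℂ, ‖z‖ ≤ 1 → r ≤ ‖z‖ →
      1 < Rfun m A z := by
  set K := {z : ℂ | ‖z‖ ≤ 1 ∧ Rfun m A z ≤ 1} with hK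
  have hKsub : K ⊆ closedBall (0:ℂ) 1 := by
    intro z hz; simpa [Complex.dist_eq] using hz.1
  have hKclosed : IsClosed K := by
    have h1 : K = closedBall (0:ℂ) 1 ∩ Rfun m A ⁻¹' (Set.Iic 1) := by
      ext z; simp [hK, Complex.dist_eq, Set.mem_setOf_eq, and_comm]
    rw [h1]
    exact ContinuousOn.preimage_isClosed_of_isClosed (Rfun_contOn hA)
      Metric.isClosed_closedBall isClosed_Iic
  have hKcompact : IsCompact K :=
    (isCompact_closedBall (0:ℂ) 1).of_isClosed_subset hKclosed hKsub
  have hKlt : ∀ z ∈ K, ‖z‖ < 1 := by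
    intro z hz
    rcases lt_or_eq_of_le hz.1 with h | h
    · exact h
    · exfalso
      have h1 := hexp' z h
      have h2 := Bfun_deriv_bound (m := m) (C := C) hA hC h
      have := hz.2
      linarith
  rcases Set.eq_empty_or_nonempty K with hKe | hKne
  · refine ⟨1/2, le_refl _, by norm_num, ?_⟩
    intro z hz1 _
    by_contra h
    push_neg at h
    have : z ∈ K := ⟨hz1, h⟩
    rw [hKe] at this; exact this
  · obtain ⟨z₀, hz₀K, hz₀max⟩ := hKcompact.exists_isMaxOn hKne
      (continuous_norm.continuousOn)
    set r := max ((1 + ‖z₀‖)/2) (1/2) with hr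
    have hz₀lt : ‖z₀‖ < 1 := hKlt z₀ hz₀K
    refine ⟨r, le_max_right _ _, ?_, ?_⟩
    · rw [hr]
      apply max_lt
      · linarith
      · norm_num
    · intro z hz1 hz2
      by_contra h
      push_neg at h
      have hzK : z ∈ K := ⟨hz1, h⟩
      have h3 := hz₀max hzK
      simp only at h3
      have h4 : (1 + ‖z₀‖)/2 ≤ r := le_max_left _ _
      have h5 : ‖z‖ ≤ ‖z₀‖ := h3
      have : ‖z‖ < r := by
        calc ‖z‖ ≤ ‖z₀‖ := h5
        _ < (1 + ‖z₀‖)/2 := by linarith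
        _ ≤ r := h4
      linarith

lemma Bfun_maps {m : ℕ} {A : ℕ → ℂ} {C : ℂ} (hA : ∀ k, ‖A k‖ < 1)
    (hC : ‖C‖ = 1) {r : ℝ} (hr2 : 1/2 ≤ r) (hr1 : r < 1)
    (hann : ∀ z : ℂ, ‖z‖ ≤ 1 → r ≤ ‖z‖ → 1 < Rfun m A z) :
    Set.MapsTo (Bfun m A C) (closedBall (0:ℂ) r) (ball (0:ℂ) r) := by
  have hr0 : (0:ℝ) < r := by linarith
  -- bound on the sphere
  have hsph : ∀ ζ : ℂ, ‖ζ‖ = r → ‖Bfun m A C ζ‖ < r := by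
    intro ζ hζ
    have hζ1 : ‖ζ‖ ≤ 1 := by rw [hζ]; linarith
    have hd : ∀ k, (1:ℂ) - (starRingEnd ℂ) (A k) * ζ ≠ 0 := fun k => denom_ne _ _ (hA k) hζ1
    have hid := Bfun_R_identity (m := m) (A := A) hC hd
    have hR := hann ζ hζ1 (le_of_eq hζ.symm)
    rw [hζ] at hid
    have h1 : 1 - r^2 > 0 := by nlinarith
    have h2 : 1 - ‖Bfun m A C ζ‖^2 > 1 - r^2 := by
      rw [hid]; nlinarith
    nlinarith [norm_nonneg (Bfun m A C ζ)]
  -- max modulus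
  have hcont : ContinuousOn (Bfun m A C) (sphere (0:ℂ) r) := by
    intro z hz
    have hz1 : ‖z‖ ≤ 1 := by
      have : ‖z‖ = r := by simpa [Complex.dist_eq] using (mem_sphere.1 hz)
      rw [this]; linarith
    exact ((Bfun_differentiableAt (fun k => denom_ne _ _ (hA k) hz1)).continuousAt).continuousWithinAt
  obtain ⟨ζ₀, hζ₀mem, hζ₀max⟩ := (isCompact_sphere (0:ℂ) r).exists_isMaxOn
    (NormedSpace.sphere_nonempty.2 hr0.le) (continuous_norm.comp_continuousOn hcont)
  have hζ₀r : ‖ζ₀‖ = r := by simpa [Complex.dist_eq] using (mem_sphere.1 hζ₀mem)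
  set c := ‖Bfun m A C ζ₀‖ with hcdef
  have hclt : c < r := hsph ζ₀ hζ₀r
  intro z hz
  have hzr : ‖z‖ ≤ r := by simpa [Complex.dist_eq] using (mem_closedBall.1 hz)
  have hdc : DiffContOnCl ℂ (Bfun m A C) (ball (0:ℂ) r) := by
    constructor
    · intro w hw
      have hw1 : ‖w‖ ≤ 1 := by
        have : ‖w‖ < r := by simpa [Complex.dist_eq] using (mem_ball.1 hw)
        linarith
      exact (Bfun_differentiableAt (fun k => denom_ne _ _ (hA k) hw1)).differentiableWithinAt
    · rw [closure_ball (0:ℂ) hr0.ne']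
      intro w hw
      have hw1 : ‖w‖ ≤ 1 := by
        have : ‖w‖ ≤ r := by simpa [Complex.dist_eq] using (mem_closedBall.1 hw)
        linarith
      exact ((Bfun_differentiableAt (fun k => denom_ne _ _ (hA k) hw1)).continuousAt).continuousWithinAt
  have hbound : ∀ w ∈ frontier (ball (0:ℂ) r), ‖Bfun m A C w‖ ≤ c := by
    rw [frontier_ball (0:ℂ) hr0.ne']
    intro w hw
    exact hζ₀max hw
  have hzcl : z ∈ closure (ball (0:ℂ) r) := by
    rw [closure_ball (0:ℂ) hr0.ne']; exact hz
  have := Complex.norm_le_of_forall_mem_frontier_norm_le isBounded_ball hdc hbound hzcl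
  rw [mem_ball, Complex.dist_eq, sub_zero]
  calc ‖Bfun m A C z‖ ≤ c := this
  _ < r := hclt

set_option maxHeartbeats 1000000 in
theorem stmt_9 (n : ℕ) (hn : 2 ≤ n) (a : Fin n → ℂ) (ha : ∀ i, ‖a i‖ < 1)
    (C : ℂ) (hC : ‖C‖ = 1)
    (B : ℂ → ℂ)
    (hB : ∀ w : ℂ, B w = C * ∏ i, (w - a i) / (1 - (starRingEnd ℂ) (a i) * w))
    (hexp : ∀ z : ℂ, ‖z‖ = 1 → 1 < ‖deriv B z‖) :
    ∃ z₀ : ℂ, ‖z₀‖ < 1 ∧ B z₀ = z₀ ∧ ‖deriv B z₀‖ < 1 ∧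
      ∀ w : ℂ, ‖w‖ < 1 → B w = w → w = z₀ := by
  classical
  set A : ℕ → ℂ := fun k => if h : k < n then a ⟨k, h⟩ else 0 with hAdef
  have hA : ∀ k, ‖A k‖ < 1 := by
    intro k
    by_cases h : k < n
    · simp only [hAdef, dif_pos h]; exact ha _
    · simp only [hAdef, dif_neg h]; simp
  have hBeq : B = Bfun n A C := by
    funext w
    rw [hB w, Bfun]
    congr 1
    rw [← Fin.prod_univ_eq_prod_range (fun k => (w - A k) / (1 - (starRingEnd ℂ) (A k) * w)) n]
    apply Finset.prod_congr rfl
    intro i _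
    have hAi : A ↑i = a i := by simp only [hAdef, dif_pos i.isLt, Fin.eta]
    rw [hAi]
  subst hBeq
  have hm : 1 ≤ n := by omega
  -- basic mapping properties on the unit ball
  have hmaps1 : Set.MapsTo (Bfun n A C) (ball (0:ℂ) 1) (ball (0:ℂ) 1) := by
    intro w hw
    rw [mem_ball_iff_abs] at hw ⊢
    exact Bfun_abs_lt hm hA hC hw
  have hdiff1 : DifferentiableOn ℂ (Bfun n A C) (ball (0:ℂ) 1) := by
    intro w hw
    rw [mem_ball_iff_abs] at hw
    exact (Bfun_differentiableAt (fun k => denom_ne _ _ (hA k) hw.le)).differentiableWithinAt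
  have habsB : ∀ w : ℂ, ‖w‖ < 1 → ‖Bfun n A C w‖ < 1 :=
    fun w hw => Bfun_abs_lt hm hA hC hw
  -- strict Schwarz-Pick
  have SPlt : ∀ x y : ℂ, ‖x‖ < 1 → ‖y‖ < 1 → x ≠ y →
      ‖(Bfun n A C x - Bfun n A C y) /
        (1 - (starRingEnd ℂ) (Bfun n A C y) * Bfun n A C x)‖ <
      ‖(x - y) / (1 - (starRingEnd ℂ) y * x)‖ := by
    intro x y hx hy hne
    obtain ⟨hle, heqc⟩ := SP_main hdiff1 hmaps1 hx hy hne
    rcases lt_or_eq_of_le hle with h | h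
    · exact h
    · exfalso
      obtain ⟨c, hc, hform⟩ := heqc h
      exact EC hn hA hexp hy (habsB y hy) hc hform
  -- attracting at any fixed point
  have ATT : ∀ p : ℂ, ‖p‖ < 1 → Bfun n A C p = p →
      ‖deriv (Bfun n A C) p‖ < 1 := by
    intro p hp hfix
    obtain ⟨hle, heqc⟩ := SP_fixed hdiff1 hmaps1 hp hfix
    rcases lt_or_eq_of_le hle with h | h
    · exact h
    · exfalso
      obtain ⟨c, hc, hform⟩ := heqc h
      have hBp : ‖Bfun n A C p‖ < 1 := by rw [hfix]; exact hp
      apply EC hn hA hexp hp hp hc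
      intro w hw
      rw [hform w hw]
  -- radius
  obtain ⟨r, hr2, hr1, hann⟩ := exists_radius hA hC hexp
  have hmapsr := Bfun_maps hA hC hr2 hr1 hann
  -- the orbit
  set z : ℕ → ℂ := fun k => (Bfun n A C)^[k] 0 with hzdef
  have hzs : ∀ k, z (k+1) = Bfun n A C (z k) := by
    intro k
    simp only [hzdef, Function.iterate_succ_apply']
  have hzK : ∀ k, z k ∈ closedBall (0:ℂ) r := by
    intro k
    induction k with
    | zero =>
      have h0 : (0:ℂ) ∈ closedBall (0:ℂ) r := by
        rw [mem_closedBall, dist_self]; linarith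
      simpa [hzdef] using h0
    | succ k ih =>
      rw [hzs k]
      exact ball_subset_closedBall (hmapsr ih)
  have habsz : ∀ k, ‖z k‖ < 1 := by
    intro k
    have := hzK k
    rw [mem_closedBall, Complex.dist_eq, sub_zero] at this
    linarith
  set d : ℕ → ℝ :=
    fun k => ‖(z (k+1) - z k) / (1 - (starRingEnd ℂ) (z k) * z (k+1))‖ with hddef
  have hmono : ∀ k, d (k+1) ≤ d k := by
    intro k
    by_cases hne : z (k+1) = z k
    · have h2 : z (k+1+1) = z (k+1) := by rw [hzs (k+1), hne, ← hzs k]; exact hne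
      simp only [hddef]
      rw [h2, sub_self, zero_div, norm_zero]
      exact norm_nonneg _
    · have h := (SP_main hdiff1 hmaps1 (habsz (k+1)) (habsz k) hne).1
      rw [← hzs (k+1), ← hzs k] at h
      exact h
  have hbdd : BddBelow (Set.range d) := ⟨0, by rintro x ⟨k, rfl⟩; exact norm_nonneg _⟩
  have hanti : Antitone d := antitone_nat_of_succ_le hmono
  set δ := ⨅ k, d k with hδdef
  have hδ : Filter.Tendsto d Filter.atTop (nhds δ) := tendsto_atTop_ciInf hanti hbdd
  obtain ⟨p, hpK, ψ, hψ, hψtend⟩ := (isCompact_closedBall (0:ℂ) r).tendsto_subseq hzK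
  have hp1 : ‖p‖ < 1 := by
    rw [mem_closedBall, Complex.dist_eq, sub_zero] at hpK; linarith
  have hBp1 : ‖Bfun n A C p‖ < 1 := habsB p hp1
  have hBcont : ∀ q : ℂ, ‖q‖ < 1 → ContinuousAt (Bfun n A C) q := fun q hq =>
    (Bfun_differentiableAt (fun k => denom_ne _ _ (hA k) hq.le)).continuousAt
  have ht1 : Filter.Tendsto (fun j => z (ψ j + 1)) Filter.atTop (nhds (Bfun n A C p)) := by
    have h := ((hBcont p hp1).tendsto).comp hψtend
    simpa only [Function.comp_def, ← hzs] using h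
  have ht2 : Filter.Tendsto (fun j => z (ψ j + 1 + 1)) Filter.atTop
      (nhds (Bfun n A C (Bfun n A C p))) := by
    have h := ((hBcont _ hBp1).tendsto).comp ht1
    simpa only [Function.comp_def, ← hzs] using h
  have hρtend : ∀ (u v : ℕ → ℂ) (U V : ℂ), ‖U‖ < 1 → ‖V‖ < 1 →
      Filter.Tendsto u Filter.atTop (nhds U) → Filter.Tendsto v Filter.atTop (nhds V) →
      Filter.Tendsto (fun j => ‖(u j - v j) / (1 - (starRingEnd ℂ) (v j) * u j)‖)
        Filter.atTop (nhds (‖(U - V) / (1 - (starRingEnd ℂ) V * U)‖)) := by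
    intro u v U V hU hV hu hv
    have hden : (1:ℂ) - (starRingEnd ℂ) V * U ≠ 0 := denom_ne _ _ hV hU.le
    have hconj : Filter.Tendsto (fun j => (starRingEnd ℂ) (v j)) Filter.atTop
        (nhds ((starRingEnd ℂ) V)) :=
      ((continuous_star.tendsto V).comp hv : _)
    have h1 : Filter.Tendsto (fun j => (u j - v j) / (1 - (starRingEnd ℂ) (v j) * u j))
        Filter.atTop (nhds ((U - V) / (1 - (starRingEnd ℂ) V * U))) :=
      Filter.Tendsto.div (hu.sub hv) (tendsto_const_nhds.sub (hconj.mul hu)) hden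
    exact ((continuous_norm.tendsto _).comp h1 : _)
  have hd1 : Filter.Tendsto (fun j => d (ψ j)) Filter.atTop (nhds δ) :=
    hδ.comp hψ.tendsto_atTop
  have hd1' : Filter.Tendsto (fun j => d (ψ j)) Filter.atTop
      (nhds (‖(Bfun n A C p - p) / (1 - (starRingEnd ℂ) p * Bfun n A C p)‖)) := by
    have h := hρtend (fun j => z (ψ j + 1)) (fun j => z (ψ j)) (Bfun n A C p) p hBp1 hp1 ht1 hψtend
    exact h
  have he1 : ‖(Bfun n A C p - p) / (1 - (starRingEnd ℂ) p * Bfun n A C p)‖ = δ :=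
    tendsto_nhds_unique hd1' hd1
  have hψ1 : Filter.Tendsto (fun j => ψ j + 1) Filter.atTop Filter.atTop :=
    (hψ.add_const 1).tendsto_atTop
  have hd2 : Filter.Tendsto (fun j => d (ψ j + 1)) Filter.atTop (nhds δ) := hδ.comp hψ1
  have hd2' : Filter.Tendsto (fun j => d (ψ j + 1)) Filter.atTop
      (nhds (‖(Bfun n A C (Bfun n A C p) - Bfun n A C p) /
        (1 - (starRingEnd ℂ) (Bfun n A C p) * Bfun n A C (Bfun n A C p))‖)) := by
    have h := hρtend (fun j => z (ψ j + 1 + 1)) (fun j => z (ψ j + 1))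
      (Bfun n A C (Bfun n A C p)) (Bfun n A C p) (habsB _ hBp1) hBp1 ht2 ht1
    exact h
  have he2 : ‖(Bfun n A C (Bfun n A C p) - Bfun n A C p) /
      (1 - (starRingEnd ℂ) (Bfun n A C p) * Bfun n A C (Bfun n A C p))‖ = δ :=
    tendsto_nhds_unique hd2' hd2
  have hfix : Bfun n A C p = p := by
    by_contra hne
    have h := SPlt (Bfun n A C p) p hBp1 hp1 hne
    rw [he2, he1] at h
    exact lt_irrefl δ h
  refine ⟨p, hp1, hfix, ATT p hp1 hfix, ?_⟩
  intro w hw hfw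
  by_contra hne
  have h := SPlt w p hw hp1 hne
  rw [hfw, hfix] at h
  exact lt_irrefl _ h
end

section
/- Let B(z) = C · ∏_{i=1}^n (z − a_i)/(1 − conj(a_i)·z) be a finite Blaschke product with n ≥ 2 such that |B'(z)| > 1 for all z ∈ ℂ with |z| = 1. Then the set {z ∈ ℂ : |z| = 1 and B(z) = z} of fixed points of B on the unit circle is finite and has exactly n − 1 elements, and each such fixed point z satisfies |B'(z)| > 1 (i.e. is repelling). -/
open Complex Finset

noncomputable def bphi (n : ℕ) (a : Fin n → ℂ) (C : ℂ) (θ : ℝ) : ℝ :=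
  C.arg + n * θ - 2 * ∑ i, (Complex.log (1 - (starRingEnd ℂ) (a i) * Complex.exp (θ * Complex.I))).im

lemma re_pos_w {a : ℂ} (ha : ‖a‖ < 1) (θ : ℝ) :
    0 < (1 - (starRingEnd ℂ) a * Complex.exp (θ * Complex.I)).re := by
  have h1 : ‖(starRingEnd ℂ) a * Complex.exp (θ * Complex.I)‖ < 1 := by
    rw [norm_mul, Complex.norm_conj, Complex.norm_exp_ofReal_mul_I, mul_one]; exact ha
  have h2 := Complex.abs_re_le_norm ((starRingEnd ℂ) a * Complex.exp (θ * Complex.I))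
  have h3 : ((starRingEnd ℂ) a * Complex.exp (θ * Complex.I)).re < 1 :=
    lt_of_le_of_lt ((le_abs_self _).trans h2) h1
  simp only [Complex.sub_re, Complex.one_re]
  linarith

lemma w_ne_zero {a : ℂ} (ha : ‖a‖ < 1) (θ : ℝ) :
    (1 - (starRingEnd ℂ) a * Complex.exp (θ * Complex.I)) ≠ 0 := by
  intro h
  have := re_pos_w ha θ
  rw [h] at this; simp at this

lemma prod_eq_exp_bphi (n : ℕ) (a : Fin n → ℂ) (ha : ∀ i, ‖a i‖ < 1)
    (C : ℂ) (hC : ‖C‖ = 1) (θ : ℝ) :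
    C * ∏ i, (Complex.exp (θ * Complex.I) - a i) /
        (1 - (starRingEnd ℂ) (a i) * Complex.exp (θ * Complex.I)) =
      Complex.exp ((bphi n a C θ : ℝ) * Complex.I) := by
  set e := Complex.exp (θ * Complex.I) with he_def
  have hee : e * (starRingEnd ℂ) e = 1 := by
    rw [Complex.mul_conj]
    norm_cast
    rw [← Complex.sq_norm, Complex.norm_exp_ofReal_mul_I]; norm_num
  have hfac : ∀ i, (e - a i) / (1 - (starRingEnd ℂ) (a i) * e) =
      e * Complex.exp ((-(2 * (Complex.log (1 - (starRingEnd ℂ) (a i) * e)).im) : ℝ) * Complex.I) := by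
    intro i
    set w := 1 - (starRingEnd ℂ) (a i) * e with hw_def
    have hw : w ≠ 0 := w_ne_zero (ha i) θ
    have hnum : e - a i = e * (starRingEnd ℂ) w := by
      have hcw : (starRingEnd ℂ) w = 1 - a i * (starRingEnd ℂ) e := by
        rw [hw_def, map_sub, map_one, map_mul, Complex.conj_conj]
      rw [hcw, mul_sub, mul_one, mul_comm (a i), ← mul_assoc, hee, one_mul]
    have hlog : w = Complex.exp (Complex.log w) := (Complex.exp_log hw).symm
    have hconjw : (starRingEnd ℂ) w = Complex.exp ((starRingEnd ℂ) (Complex.log w)) := by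
      rw [Complex.exp_conj, ← hlog]
    have harg : ((-(2 * (Complex.log w).im) : ℝ) : ℂ) * Complex.I =
        (starRingEnd ℂ) (Complex.log w) - Complex.log w := by
      have := Complex.sub_conj (Complex.log w)
      push_cast at this ⊢
      linear_combination this
    rw [hnum, harg, Complex.exp_sub, ← hconjw, ← hlog, mul_div_assoc]
  rw [Finset.prod_congr rfl (fun i _ => hfac i), Finset.prod_mul_distrib,
    Finset.prod_const, ← Complex.exp_sum, Finset.card_univ, Fintype.card_fin]
  have hCe : C = Complex.exp ((C.arg : ℝ) * Complex.I) := by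
    conv_lhs => rw [← Complex.norm_mul_exp_arg_mul_I C]
    rw [hC, Complex.ofReal_one, one_mul]
  have hen : (e : ℂ) ^ n = Complex.exp ((n : ℂ) * (θ * Complex.I)) := by
    rw [Complex.exp_nat_mul]
  have hkey : ((bphi n a C θ : ℝ) : ℂ) * Complex.I =
      (C.arg : ℂ) * Complex.I + (n : ℂ) * ((θ : ℂ) * Complex.I) +
        ∑ i, ((-(2 * (Complex.log (1 - (starRingEnd ℂ) (a i) * e)).im) : ℝ) : ℂ) * Complex.I := by
    simp only [bphi, ← he_def]
    push_cast
    simp only [neg_mul, Finset.sum_neg_distrib, ← Finset.sum_mul, ← Finset.mul_sum]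
    ring
  rw [hkey, Complex.exp_add, Complex.exp_add, ← hCe, ← hen]
  ring

lemma hasDerivAt_cexp_theta (θ : ℝ) :
    HasDerivAt (fun θ : ℝ => Complex.exp (θ * Complex.I)) (Complex.exp (θ * Complex.I) * Complex.I) θ := by
  have hfun : circleMap 0 1 = fun θ : ℝ => Complex.exp (θ * Complex.I) := by
    funext t; simp [circleMap]
  have := hasDerivAt_circleMap 0 1 θ
  rw [hfun] at this
  simpa [circleMap] using this

lemma hasDerivAt_factor {a : ℂ} (ha : ‖a‖ < 1) (θ : ℝ) :
    HasDerivAt (fun θ : ℝ => θ - 2 * (Complex.log (1 - (starRingEnd ℂ) a * Complex.exp (θ * Complex.I))).im)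
      ((1 - Complex.normSq a) / Complex.normSq (1 - (starRingEnd ℂ) a * Complex.exp (θ * Complex.I))) θ := by
  set e := Complex.exp (θ * Complex.I) with he_def
  set w := 1 - (starRingEnd ℂ) a * e with hw_def
  have hw : w ≠ 0 := w_ne_zero ha θ
  have hwre : 0 < w.re := re_pos_w ha θ
  have hw' : HasDerivAt (fun θ : ℝ => 1 - (starRingEnd ℂ) a * Complex.exp (θ * Complex.I))
      (-((starRingEnd ℂ) a * (e * Complex.I))) θ :=
    ((hasDerivAt_cexp_theta θ).const_mul ((starRingEnd ℂ) a)).const_sub 1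
  have hslit : w ∈ Complex.slitPlane := Complex.mem_slitPlane_iff.mpr (Or.inl hwre)
  have hlog : HasDerivAt (fun θ : ℝ => Complex.log (1 - (starRingEnd ℂ) a * Complex.exp (θ * Complex.I)))
      (-((starRingEnd ℂ) a * (e * Complex.I)) / w) θ := hw'.clog_real hslit
  have him : HasDerivAt (fun θ : ℝ => (Complex.log (1 - (starRingEnd ℂ) a * Complex.exp (θ * Complex.I))).im)
      ((-((starRingEnd ℂ) a * (e * Complex.I)) / w).im) θ :=
    Complex.imCLM.hasFDerivAt.comp_hasDerivAt θ hlog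
  have hcomb := (hasDerivAt_id θ).fun_sub (him.const_mul 2)
  refine hcomb.congr_deriv ?_
  symm
  -- identity : (1 - normSq a)/normSq w = 1 - 2 * (...)
  have hN : Complex.normSq w ≠ 0 := by simpa [Complex.normSq_eq_zero] using hw
  have he1 : e.re ^ 2 + e.im ^ 2 = 1 := by
    have : Complex.normSq e = 1 := by
      rw [Complex.normSq_eq_norm_sq, Complex.norm_exp_ofReal_mul_I]; norm_num
    simpa [Complex.normSq_apply, sq] using this
  have key : Complex.normSq w -
      2 * ((-((starRingEnd ℂ) a * (e * Complex.I))).im * w.re -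
        (-((starRingEnd ℂ) a * (e * Complex.I))).re * w.im) = 1 - Complex.normSq a := by
    simp only [Complex.normSq_apply, Complex.neg_im, Complex.neg_re, Complex.mul_im, Complex.mul_re,
      Complex.I_re, Complex.I_im, Complex.conj_re, Complex.conj_im, Complex.sub_re, Complex.sub_im,
      Complex.one_re, Complex.one_im, hw_def]
    linear_combination (-(a.re ^ 2) - a.im ^ 2) * he1
  rw [Complex.div_im, div_sub_div_same, ← key]
  field_simp

lemma bphi_add_two_pi (n : ℕ) (a : Fin n → ℂ) (C : ℂ) (θ : ℝ) :
    bphi n a C (θ + 2 * Real.pi) = bphi n a C θ + 2 * Real.pi * n := by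
  have hexp2 : Complex.exp ((↑(θ + 2 * Real.pi) : ℂ) * Complex.I) = Complex.exp ((θ : ℂ) * Complex.I) := by
    push_cast
    rw [add_mul, Complex.exp_add, Complex.exp_two_pi_mul_I, mul_one]
  simp only [bphi, hexp2]
  ring

lemma hasDerivAt_bphi (n : ℕ) (a : Fin n → ℂ) (ha : ∀ i, ‖a i‖ < 1) (C : ℂ) (θ : ℝ) :
    HasDerivAt (bphi n a C)
      (∑ i, (1 - Complex.normSq (a i)) / Complex.normSq (1 - (starRingEnd ℂ) (a i) * Complex.exp (θ * Complex.I))) θ := by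
  have hfun : bphi n a C = fun t : ℝ =>
      C.arg + ∑ i, (t - 2 * (Complex.log (1 - (starRingEnd ℂ) (a i) * Complex.exp (t * Complex.I))).im) := by
    funext t
    rw [bphi, Finset.sum_sub_distrib, Finset.sum_const, Finset.card_univ, Fintype.card_fin,
      nsmul_eq_mul, ← Finset.mul_sum]
    ring
  rw [hfun]
  exact (HasDerivAt.fun_sum (fun i _ => hasDerivAt_factor (ha i) θ)).const_add _


lemma exp_eq_exp_real {x y : ℝ}
    (h : Complex.exp ((x : ℂ) * Complex.I) = Complex.exp ((y : ℂ) * Complex.I)) :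
    ∃ k : ℤ, x = y + 2 * Real.pi * k := by
  obtain ⟨k, hk⟩ := Complex.exp_eq_exp_iff_exists_int.mp h
  refine ⟨k, ?_⟩
  rw [show ((k : ℂ)) * (2 * (Real.pi : ℂ) * Complex.I) = ((k : ℂ) * (2 * (Real.pi : ℂ))) * Complex.I
    by ring, ← add_mul] at hk
  have h2 : ((x : ℂ)) = (y : ℂ) + (k : ℂ) * (2 * (Real.pi : ℂ)) := mul_right_cancel₀ Complex.I_ne_zero hk
  have h3 : x = y + (k : ℝ) * (2 * Real.pi) := by exact_mod_cast h2
  linear_combination h3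

lemma exp_real_shift (x : ℝ) (k : ℤ) :
    Complex.exp ((↑(x + 2 * Real.pi * k) : ℂ) * Complex.I) = Complex.exp ((x : ℂ) * Complex.I) := by
  push_cast
  rw [add_mul, Complex.exp_add,
    show ((2:ℂ) * (Real.pi:ℂ) * (k:ℂ)) * Complex.I = (k : ℂ) * (2 * (Real.pi:ℂ) * Complex.I) by ring,
    Complex.exp_int_mul_two_pi_mul_I, mul_one]

theorem stmt_10 (n : ℕ) (hn : 2 ≤ n) (a : Fin n → ℂ) (ha : ∀ i, ‖a i‖ < 1)
    (C : ℂ) (hC : ‖C‖ = 1)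
    (B : ℂ → ℂ)
    (hB : ∀ w : ℂ, B w = C * ∏ i, (w - a i) / (1 - (starRingEnd ℂ) (a i) * w))
    (hexp : ∀ z : ℂ, ‖z‖ = 1 → 1 < ‖deriv B z‖) :
    {z : ℂ | ‖z‖ = 1 ∧ B z = z}.Finite ∧
    {z : ℂ | ‖z‖ = 1 ∧ B z = z}.ncard = n - 1 ∧
    ∀ z : ℂ, ‖z‖ = 1 → B z = z → 1 < ‖deriv B z‖ := by
  have hπ := Real.pi_pos
  set φ : ℝ → ℝ := bphi n a C with hφ_def
  set D : ℝ → ℝ := fun θ =>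
    ∑ i, (1 - Complex.normSq (a i)) / Complex.normSq (1 - (starRingEnd ℂ) (a i) * Complex.exp (θ * Complex.I))
    with hD_def
  have hφd : ∀ θ, HasDerivAt φ (D θ) θ := fun θ => hasDerivAt_bphi n a ha C θ
  -- B maps exp(θI) to exp(φθ I)
  have hBe : ∀ θ : ℝ, B (Complex.exp (θ * Complex.I)) = Complex.exp ((φ θ : ℝ) * Complex.I) := by
    intro θ
    rw [hB]
    exact prod_eq_exp_bphi n a ha C hC θ
  -- derivative comparison
  have hD_eq : ∀ θ : ℝ, ‖deriv B (Complex.exp (θ * Complex.I))‖ = |D θ| := by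
    intro θ
    have hdiffB : DifferentiableAt ℂ B (Complex.exp (θ * Complex.I)) := by
      have hBfun : B = fun w => C * ∏ i, (w - a i) / (1 - (starRingEnd ℂ) (a i) * w) := funext hB
      rw [hBfun]
      apply DifferentiableAt.const_mul
      have hfac : ∀ i ∈ Finset.univ, DifferentiableAt ℂ
          (fun w : ℂ => (w - a i) / (1 - (starRingEnd ℂ) (a i) * w)) (Complex.exp (θ * Complex.I)) := by
        intro i _
        exact DifferentiableAt.div (differentiableAt_id.sub (differentiableAt_const _))
          ((differentiableAt_const _).sub ((differentiableAt_const _).mul differentiableAt_id))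
          (w_ne_zero (ha i) θ)
      exact (HasDerivAt.fun_finsetProd (fun i hi => (hfac i hi).hasDerivAt)).differentiableAt
    have h1 : HasDerivAt (fun t : ℝ => B (Complex.exp (t * Complex.I)))
        ((Complex.exp (θ * Complex.I) * Complex.I) • deriv B (Complex.exp (θ * Complex.I))) θ :=
      HasDerivAt.scomp θ hdiffB.hasDerivAt (hasDerivAt_cexp_theta θ)
    have h2 : HasDerivAt (fun t : ℝ => Complex.exp ((φ t : ℝ) * Complex.I))
        (Complex.exp ((φ θ : ℝ) * Complex.I) * ((D θ : ℂ) * Complex.I)) θ :=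
      (((hφd θ).ofReal_comp).mul_const Complex.I).cexp
    have hfeq : (fun t : ℝ => B (Complex.exp (t * Complex.I))) =
        (fun t : ℝ => Complex.exp ((φ t : ℝ) * Complex.I)) := funext fun t => hBe t
    rw [hfeq] at h1
    have := h1.unique h2
    have habs := congrArg (‖·‖) this
    simpa [norm_mul, Complex.norm_exp_ofReal_mul_I, Complex.norm_I, Complex.norm_real] using habs
  have hD1 : ∀ θ : ℝ, 1 < D θ := by
    intro θ
    have h := hexp (Complex.exp (θ * Complex.I)) (Complex.norm_exp_ofReal_mul_I θ)
    rw [hD_eq θ] at h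
    rcases abs_cases (D θ) with ⟨h1, _⟩ | ⟨h1, h2⟩
    · linarith
    · -- D θ < 0 impossible since each term positive; but |D| >1 with D ≤ 0 gives D < -1; contradict positivity
      exfalso
      have hpos : 0 < D θ := by
        rw [hD_def]
        apply Finset.sum_pos
        · intro i _
          apply div_pos
          · have := ha i
            have h2 := Complex.normSq_eq_norm_sq (a i)
            nlinarith [norm_nonneg (a i)]
          · have := w_ne_zero (ha i) θ
            exact lt_of_le_of_ne (Complex.normSq_nonneg _) (Ne.symm (by simpa [Complex.normSq_eq_zero] using this))
        · exact Finset.univ_nonempty_iff.mpr (by exact Fin.pos_iff_nonempty.mp (by omega))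
      linarith
  -- g strictly monotone
  set g : ℝ → ℝ := fun θ => φ θ - θ with hg_def
  have hgd : ∀ θ, HasDerivAt g (D θ - 1) θ := fun θ => (hφd θ).sub (hasDerivAt_id θ)
  have hgmono : StrictMono g := by
    apply strictMono_of_deriv_pos
    intro θ
    rw [(hgd θ).deriv]
    linarith [hD1 θ]
  have hginj : Function.Injective g := hgmono.injective
  -- periodicity
  have hgper : ∀ θ, g (θ + 2 * Real.pi) = g θ + 2 * Real.pi * ((n : ℝ) - 1) := by
    intro θ
    simp only [hg_def, hφ_def]
    rw [bphi_add_two_pi n a C θ]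
    ring
  have hgk : ∀ (θ : ℝ) (k : ℤ), g (θ + 2 * Real.pi * k) = g θ + 2 * Real.pi * ((n : ℝ) - 1) * k := by
    have p : Function.Periodic (fun θ : ℝ => g θ - ((n : ℝ) - 1) * θ) (2 * Real.pi) := by
      intro θ
      simp only
      rw [hgper]
      ring
    intro θ k
    have h1 := (p.int_mul k) θ
    have e1 : θ + (k : ℝ) * (2 * Real.pi) = θ + 2 * Real.pi * k := by ring
    rw [e1] at h1
    linear_combination h1
  -- surjectivity
  have hgcont : Continuous g := by
    rw [continuous_iff_continuousAt]; exact fun θ => (hgd θ).continuousAt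
  have hgsurj : Function.Surjective g := by
    have hn1 : (1 : ℝ) ≤ (n : ℝ) - 1 := by
      have : (2 : ℝ) ≤ n := by exact_mod_cast hn
      linarith
    apply hgcont.surjective
    · apply Filter.tendsto_atTop_atTop_of_monotone hgmono.monotone
      intro b
      obtain ⟨k, hk⟩ := exists_nat_ge ((b - g 0) / (2 * Real.pi))
      refine ⟨2 * Real.pi * k, ?_⟩
      have h1 : g (0 + 2 * Real.pi * (k : ℤ)) = g 0 + 2 * Real.pi * ((n : ℝ) - 1) * (k : ℤ) := hgk 0 k
      rw [zero_add] at h1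
      push_cast at h1
      rw [h1]
      have h2 : b - g 0 ≤ 2 * Real.pi * k := by
        rw [div_le_iff₀ (by linarith)] at hk
        linarith
      have h4 : 0 ≤ (2 * Real.pi * (k : ℝ)) * ((n : ℝ) - 2) :=
        mul_nonneg (by positivity) (by linarith)
      nlinarith
    · apply Filter.tendsto_atBot_atBot_of_monotone hgmono.monotone
      intro b
      obtain ⟨k, hk⟩ := exists_nat_ge ((g 0 - b) / (2 * Real.pi))
      refine ⟨2 * Real.pi * (-(k : ℤ) : ℤ), ?_⟩
      have h1 : g (0 + 2 * Real.pi * ((-(k : ℤ) : ℤ) : ℝ)) = g 0 + 2 * Real.pi * ((n : ℝ) - 1) * ((-(k : ℤ) : ℤ) : ℝ) := hgk 0 _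
      rw [zero_add] at h1
      push_cast at h1 ⊢
      rw [h1]
      have h2 : g 0 - b ≤ 2 * Real.pi * k := by
        rw [div_le_iff₀ (by linarith)] at hk
        linarith
      have h4 : 0 ≤ (2 * Real.pi * (k : ℝ)) * ((n : ℝ) - 2) :=
        mul_nonneg (by positivity) (by linarith)
      nlinarith
  -- fixed points
  set θm : ℤ → ℝ := fun k => Classical.choose (hgsurj (2 * Real.pi * k)) with hθm_def
  have hθm : ∀ k : ℤ, g (θm k) = 2 * Real.pi * k := fun k => Classical.choose_spec (hgsurj (2 * Real.pi * k))
  have hθshift : ∀ (k j : ℤ), θm (k + ((n : ℤ) - 1) * j) = θm k + 2 * Real.pi * j := by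
    intro k j
    apply hginj
    rw [hθm, hgk, hθm]
    push_cast
    ring
  have hθmono : StrictMono θm := by
    intro k l hkl
    have := hθm k; have := hθm l
    by_contra hc
    push_neg at hc
    have := hgmono.monotone hc
    rw [hθm, hθm] at this
    have : (l : ℝ) ≤ k := by
      have h2 : 0 < 2 * Real.pi := by linarith
      nlinarith
    exact absurd (by exact_mod_cast this) (not_le.mpr (by exact_mod_cast hkl))
  -- the fixed point finset
  set F : ℕ → ℂ := fun k => Complex.exp ((θm k : ℝ) * Complex.I) with hF_def
  have hN : (0 : ℤ) < (n : ℤ) - 1 := by omega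
  have hφg : ∀ θ : ℝ, φ θ = θ + g θ := fun θ => by rw [hg_def]; ring
  have hSet : {z : ℂ | ‖z‖ = 1 ∧ B z = z} = ↑((Finset.range (n - 1)).image F) := by
    ext z
    simp only [Set.mem_setOf_eq, Finset.coe_image, Set.mem_image, Finset.mem_coe, Finset.mem_range]
    constructor
    · rintro ⟨h1, h2⟩
      have hz : z = Complex.exp ((z.arg : ℂ) * Complex.I) := by
        conv_lhs => rw [← Complex.norm_mul_exp_arg_mul_I z]
        rw [h1, Complex.ofReal_one, one_mul]
      rw [hz] at h2
      rw [hBe z.arg] at h2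
      obtain ⟨k, hk⟩ := exp_eq_exp_real h2
      have hgθ : g z.arg = 2 * Real.pi * k := by
        rw [hg_def]
        simp only
        linarith [hφg z.arg]
      have hθeq : z.arg = θm k := hginj (by rw [hθm k, hgθ])
      set r : ℤ := k % ((n : ℤ) - 1) with hr_def
      set j : ℤ := k / ((n : ℤ) - 1) with hj_def
      have hrk : r + ((n : ℤ) - 1) * j = k := by
        rw [hr_def, hj_def]
        exact Int.emod_add_mul_ediv k ((n : ℤ) - 1)
      have hθmk : θm k = θm r + 2 * Real.pi * j := by
        have h5 := hθshift r j
        rw [hrk] at h5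
        exact h5
      have hr1 : r < (n : ℤ) - 1 := Int.emod_lt_of_pos k hN
      have hr0 : 0 ≤ r := Int.emod_nonneg k (by omega)
      have hr1' : (r.toNat : ℤ) < (n : ℤ) - 1 := by rwa [Int.toNat_of_nonneg hr0]
      refine ⟨r.toNat, by omega, ?_⟩
      rw [hF_def]
      simp only
      rw [Int.toNat_of_nonneg hr0, hz, hθeq, hθmk]
      exact (exp_real_shift (θm r) j).symm
    · rintro ⟨k, hkn, rfl⟩
      constructor
      · exact Complex.norm_exp_ofReal_mul_I _
      · rw [hF_def]
        simp only
        rw [hBe (θm k)]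
        have hφθm : φ (θm (k : ℤ)) = θm (k : ℤ) + 2 * Real.pi * (k : ℤ) := by
          rw [hφg, hθm]
        rw [hφθm]
        exact exp_real_shift (θm (k : ℤ)) (k : ℤ)
  have hθub : ∀ k1 k2 : ℕ, (k1 : ℤ) < (k2 : ℤ) → (k2 : ℤ) < (n : ℤ) - 1 → F k1 ≠ F k2 := by
    intro k1 k2 hlt hub heq
    have h1 : θm k1 < θm k2 := hθmono hlt
    have h2 : θm (k2 : ℤ) < θm ((n : ℤ) - 1) := hθmono hub
    have h3 : θm ((n : ℤ) - 1) = θm 0 + 2 * Real.pi := by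
      have := hθshift 0 1
      simp only [zero_add, mul_one] at this
      rw [this]
      push_cast
      ring
    have h4 : θm (0 : ℤ) ≤ θm (k1 : ℤ) := hθmono.monotone (by positivity)
    obtain ⟨l, hl⟩ := exp_eq_exp_real (heq : Complex.exp _ = Complex.exp _)
    have hl1 : 2 * Real.pi * l < 0 := by linarith
    have hl2 : -(2 * Real.pi) < 2 * Real.pi * l := by linarith
    rcases le_or_gt 0 l with hc | hc
    · have : (0 : ℝ) ≤ (l : ℝ) := by exact_mod_cast hc
      nlinarith
    · have : (l : ℤ) ≤ -1 := by omega
      have : (l : ℝ) ≤ -1 := by exact_mod_cast this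
      nlinarith
  have hinjF : Set.InjOn F ↑(Finset.range (n - 1)) := by
    intro k1 h1 k2 h2 heq
    simp only [Finset.coe_range, Set.mem_Iio] at h1 h2
    rcases lt_trichotomy k1 k2 with h | h | h
    · exact absurd heq (hθub k1 k2 (by exact_mod_cast h) (by omega))
    · exact h
    · exact absurd heq.symm (hθub k2 k1 (by exact_mod_cast h) (by omega))
  refine ⟨?_, ?_, fun z h1 h2 => hexp z h1⟩
  · rw [hSet]; exact (Finset.finite_toSet _)
  · rw [hSet, Set.ncard_coe_finset, Finset.card_image_of_injOn hinjF, Finset.card_range]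
end

section
/- Let H be a complex Banach space, let C, P : H → H be continuous linear maps with P ∘ P = P and C ∘ P = P, and set Q = id − P. Suppose μ ∈ ℂ with μ ≠ 0 and μ ≠ 1 is an eigenvalue of Q ∘ C, with eigenvector f ≠ 0, (Q ∘ C) f = μ f. Then the vector g = (1 − μ)·f − P(C f) is nonzero and satisfies C g = μ g; in particular μ is an eigenvalue of C. -/
theorem stmt_13 (H : Type*) [NormedAddCommGroup H] [NormedSpace ℂ H] [CompleteSpace H]
    (C P : H →L[ℂ] H) (hP : P.comp P = P) (hCP : C.comp P = P)
    (μ : ℂ) (hμ0 : μ ≠ 0) (hμ1 : μ ≠ 1)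
    (f : H) (hf : f ≠ 0)
    (hev : ((ContinuousLinearMap.id ℂ H - P).comp C) f = μ • f) :
    (1 - μ) • f - P (C f) ≠ 0 ∧ C ((1 - μ) • f - P (C f)) = μ • ((1 - μ) • f - P (C f)) := by
  have hPP : ∀ x, P (P x) = P x := fun x => DFunLike.congr_fun hP x
  have hCPx : ∀ x, C (P x) = P x := fun x => DFunLike.congr_fun hCP x
  have h1 : C f - P (C f) = μ • f := by simpa using hev
  have hCf : C f = μ • f + P (C f) := by
    have := h1; linear_combination (norm := abel_nf) this
  have hμ1' : (1 - μ) ≠ 0 := sub_ne_zero.mpr (Ne.symm hμ1)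
  constructor
  · intro hg
    have hp : (1 - μ) • f = P (C f) := by
      have := sub_eq_zero.mp hg; exact this
    -- C fixes P (C f)
    have hCfeq : (1 - μ) • C f = (1 - μ) • f := by
      calc (1 - μ) • C f = C ((1 - μ) • f) := (C.map_smul _ _).symm
        _ = C (P (C f)) := by rw [hp]
        _ = P (C f) := hCPx _
        _ = (1 - μ) • f := hp.symm
    have hCff : C f = f := smul_right_injective H hμ1' hCfeq
    have hPf : (1 - μ) • P f = (1 - μ) • f := by
      calc (1 - μ) • P f = P ((1 - μ) • f) := (P.map_smul _ _).symm
        _ = P (P (C f)) := by rw [hp]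
        _ = P (C f) := hPP _
        _ = (1 - μ) • f := hp.symm
    have hPff : P f = f := smul_right_injective H hμ1' hPf
    have : f = (1 - μ) • f := by
      calc f = P f := hPff.symm
        _ = P (C f) := by rw [hCff]
        _ = (1 - μ) • f := hp.symm
    have : μ • f = 0 := by
      have h := this
      nth_rewrite 1 [← one_smul ℂ f] at h
      have : (1 : ℂ) • f - (1 - μ) • f = 0 := by rw [h]; abel
      rw [← sub_smul] at this
      simpa using this
    exact hf (by simpa [hμ0] using smul_eq_zero.mp this)
  · have hCp : C (P (C f)) = P (C f) := hCPx _
    set p := P (C f) with hpdef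
    rw [map_sub, C.map_smul, hCp, hCf]
    module
end

section
/- Let μ ∈ ℂ with |μ| < 1 and define B(z) = z·(μ − z)/(1 − conj(μ)·z). Then |B'(z)| > 1 for every z ∈ ℂ with |z| = 1, where B' denotes the complex derivative. Hence the restriction of B to the unit circle is an analytic expanding circle map, for every μ in the open unit disk. -/
theorem stmt_16 (μ : ℂ) (hμ : ‖μ‖ < 1)
    (B : ℂ → ℂ) (hB : ∀ w : ℂ, B w = w * (μ - w) / (1 - (starRingEnd ℂ) μ * w)) :
    ∀ z : ℂ, ‖z‖ = 1 → 1 < ‖deriv B z‖ := by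
  intro z hz
  set a : ℂ := (starRingEnd ℂ) μ * z with ha
  have haabs : ‖a‖ < 1 := by
    rw [ha, norm_mul, Complex.norm_conj, hz, mul_one]; exact hμ
  have hden : (1 : ℂ) - a ≠ 0 := by
    intro h
    have h1 : a = 1 := by linear_combination -h
    rw [h1] at haabs
    simp at haabs
  have hzz : z * (starRingEnd ℂ) z = 1 := by
    rw [Complex.mul_conj, Complex.normSq_eq_norm_sq, hz]
    norm_num
  have hf : HasDerivAt (fun w : ℂ => w * (μ - w)) (μ - 2*z) z := by
    have h := (hasDerivAt_id z).mul ((hasDerivAt_const z μ).sub (hasDerivAt_id z))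
    simp only [id_eq] at h
    exact h.congr_deriv (by simp only [Pi.sub_apply, id_eq]; ring)
  have hg : HasDerivAt (fun w : ℂ => 1 - (starRingEnd ℂ) μ * w) (-(starRingEnd ℂ) μ) z := by
    have h := (hasDerivAt_const z (1:ℂ)).sub ((hasDerivAt_id z).const_mul ((starRingEnd ℂ) μ))
    exact h.congr_deriv (by ring)
  have hBd : HasDerivAt B
      (((μ - 2*z) * (1 - (starRingEnd ℂ) μ * z) - (z*(μ-z)) * (-(starRingEnd ℂ) μ)) /
        (1 - (starRingEnd ℂ) μ * z)^2) z := by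
    have hB' : B = fun w => (w * (μ - w)) / (1 - (starRingEnd ℂ) μ * w) := funext hB
    rw [hB']
    exact hf.div hg hden
  rw [hBd.deriv]
  have hca : (starRingEnd ℂ) a = μ * (starRingEnd ℂ) z := by
    rw [ha, map_mul, Complex.conj_conj]
  have hnum : (μ - 2*z) * (1 - (starRingEnd ℂ) μ * z) - (z*(μ-z)) * (-(starRingEnd ℂ) μ)
      = z * (a + (starRingEnd ℂ) a - 2) := by
    rw [hca, ha]
    linear_combination (-μ) * hzz
  rw [hnum, norm_div, norm_pow, norm_mul, hz, one_mul]
  rw [← ha, lt_div_iff₀ (pow_pos (norm_pos_iff.mpr hden) 2), one_mul]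
  have hre : a.re < 1 := lt_of_le_of_lt (Complex.re_le_norm a) haabs
  have h1 : a + (starRingEnd ℂ) a - 2 = ((2*a.re - 2 : ℝ) : ℂ) := by
    rw [Complex.add_conj]
    push_cast
    ring
  rw [h1, Complex.norm_real, Real.norm_eq_abs, abs_of_nonpos (by linarith)]
  have h2 : ‖1 - a‖^2 = (1 - a.re)^2 + a.im^2 := by
    rw [Complex.sq_norm, Complex.normSq_apply]
    simp
    ring
  have h3 : a.re^2 + a.im^2 < 1 := by
    have := Complex.sq_norm a
    rw [Complex.normSq_apply] at this
    nlinarith [norm_nonneg a]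
  rw [h2]
  nlinarith
end

section
/- Let U ⊆ ℂ be an open set containing the closed unit disk {z : |z| ≤ 1}, and let f : ℂ → ℂ be holomorphic on U with |f(z)| = 1 for every z with |z| = 1. Then f agrees on the closed unit disk with a finite Blaschke product: there exist n ∈ ℕ, a constant C ∈ ℂ with |C| = 1, and complex numbers a_1, …, a_n with |a_i| < 1 such that f(z) = C · ∏_{i=1}^n (z − a_i)/(1 − conj(a_i)·z) for all z with |z| ≤ 1. -/
open Metric Set Complex Filter Topology


-- order = 0 iff nonzero at point
lemma myOrderZero {f : ℂ → ℂ} {a : ℂ} (hf : AnalyticAt ℂ f a) :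
    analyticOrderAt f a = 0 ↔ f a ≠ 0 := by
  constructor
  · intro h
    obtain ⟨g, hg, hga, heq⟩ := (hf.analyticOrderAt_eq_natCast (n := 0)).mp (by exact_mod_cast h)
    have h0 : f a = g a := by simpa using heq.self_of_nhds
    rw [h0]; exact hga
  · intro h
    exact (hf.analyticOrderAt_eq_natCast (n := 0)).mpr ⟨f, hf, h, by filter_upwards with z; simp⟩

-- dividing once by (z-a) via dslope
lemma myFactorPow (V : Set ℂ) (hV : IsOpen V) (a : ℂ) (haV : a ∈ V) :
    ∀ n : ℕ, ∀ f : ℂ → ℂ, DifferentiableOn ℂ f V → ∀ (h : AnalyticAt ℂ f a), analyticOrderAt f a = n →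
    ∃ (k : ℕ) (g : ℂ → ℂ), DifferentiableOn ℂ g V ∧ g a ≠ 0 ∧
      ∀ z, f z = (z - a) ^ k * g z := by
  intro n
  induction n with
  | zero =>
    intro f hf h hord
    exact ⟨0, f, hf, (myOrderZero h).mp hord, fun z => by simp⟩
  | succ m ih =>
    intro f hf h hord
    have hfa : f a = 0 := by
      by_contra hne
      rw [(myOrderZero h).mpr hne] at hord
      exact_mod_cast hord
    set g₁ := dslope f a with hg₁def
    have hg₁ : DifferentiableOn ℂ g₁ V :=
      (differentiableOn_dslope (hV.mem_nhds haV)).mpr hf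
    have hkey : ∀ z, f z = (z - a) * g₁ z := by
      intro z
      have := sub_smul_dslope f a z
      rw [hfa, sub_zero] at this
      simpa [smul_eq_mul] using this.symm
    have hg₁a : AnalyticAt ℂ g₁ a := hg₁.analyticAt (hV.mem_nhds haV)
    -- order of g₁ at a is m
    obtain ⟨w, hw, hwa, heq⟩ := (h.analyticOrderAt_eq_natCast (n := m + 1)).mp hord
    have hpt : g₁ a = (fun z => (z - a) ^ m * w z) a := by
      have h1 : Filter.Tendsto g₁ (𝓝[≠] a) (𝓝 (g₁ a)) :=
        hg₁a.continuousAt.continuousWithinAt.tendsto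
      have h2 : Filter.Tendsto (fun z => (z - a) ^ m * w z) (𝓝[≠] a)
          (𝓝 ((fun z => (z - a) ^ m * w z) a)) := by
        apply ContinuousAt.continuousWithinAt
        exact (((continuous_id.sub continuous_const).pow m).continuousAt).mul hw.continuousAt
      have heq' : g₁ =ᶠ[𝓝[≠] a] fun z => (z - a) ^ m * w z := by
        filter_upwards [eventually_nhdsWithin_of_eventually_nhds heq,
          self_mem_nhdsWithin] with z hz hz'
        have hza : z - a ≠ 0 := sub_ne_zero.mpr hz'
        have := hkey z
        rw [hz] at this
        have : (z - a) * g₁ z = (z - a) * ((z - a) ^ m * w z) := by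
          rw [← this]; simp [smul_eq_mul]; ring
        exact mul_left_cancel₀ hza this
      exact tendsto_nhds_unique (h1.congr' heq') h2
    have hordg : analyticOrderAt g₁ a = m := by
      apply (hg₁a.analyticOrderAt_eq_natCast (n := m)).mpr
      refine ⟨w, hw, hwa, ?_⟩
      have : ∀ᶠ z in 𝓝 a, f z = (z - a) ^ (m + 1) • w z := heq
      filter_upwards [this] with z hz
      by_cases hza : z = a
      · subst hza; simpa using hpt
      · have hza' : z - a ≠ 0 := sub_ne_zero.mpr hza
        have h3 := hkey z
        rw [hz] at h3
        have h4 : (z - a) * g₁ z = (z - a) * ((z - a) ^ m * w z) := by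
          rw [← h3]; simp [smul_eq_mul]; ring
        simpa [smul_eq_mul] using mul_left_cancel₀ hza' h4
    obtain ⟨k, g, hg, hga, hfac⟩ := ih g₁ hg₁ hg₁a hordg
    refine ⟨k + 1, g, hg, hga, fun z => ?_⟩
    rw [hkey z, hfac z]; ring


lemma myFiniteZeros {r : ℝ} (hr : 1 < r) (f : ℂ → ℂ)
    (hf : DifferentiableOn ℂ f (ball (0:ℂ) r)) (h1 : f 1 ≠ 0) :
    {z ∈ closedBall (0:ℂ) 1 | f z = 0}.Finite := by
  have hsub : closedBall (0:ℂ) 1 ⊆ ball (0:ℂ) r := closedBall_subset_ball hr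
  have h1mem : (1:ℂ) ∈ ball (0:ℂ) r := by
    simpa [mem_ball_zero_iff] using hr
  by_contra hinf
  have hinf' : {z ∈ closedBall (0:ℂ) 1 | f z = 0}.Infinite := fun h => hinf h
  obtain ⟨x, hxK, hacc⟩ := hinf'.exists_accPt_of_subset_isCompact
    (isCompact_closedBall (0:ℂ) 1) (sep_subset _ _)
  have hfreq : ∃ᶠ z in 𝓝[≠] x, f z = 0 := by
    have := accPt_iff_frequently.mp hacc
    rw [frequently_nhdsWithin_iff]
    apply this.mono
    rintro z ⟨hzx, _, hz0⟩
    exact ⟨hz0, hzx⟩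
  have := (hf.analyticOnNhd isOpen_ball).eqOn_zero_of_preconnected_of_frequently_eq_zero
    (convex_ball (0:ℂ) r).isPreconnected (hsub hxK) hfreq
  exact h1 (this h1mem)


lemma myFactorAll {r : ℝ} (hr : 1 < r) :
    ∀ N : ℕ, ∀ f : ℂ → ℂ, DifferentiableOn ℂ f (ball (0:ℂ) r) → f 1 ≠ 0 →
    {z ∈ closedBall (0:ℂ) 1 | f z = 0}.ncard ≤ N →
    ∃ (n : ℕ) (a : Fin n → ℂ) (g : ℂ → ℂ), DifferentiableOn ℂ g (ball (0:ℂ) r) ∧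
      (∀ i, a i ∈ closedBall (0:ℂ) 1 ∧ f (a i) = 0) ∧
      (∀ z ∈ closedBall (0:ℂ) 1, g z ≠ 0) ∧
      ∀ z, f z = (∏ i, (z - a i)) * g z := by
  have hsub : closedBall (0:ℂ) 1 ⊆ ball (0:ℂ) r := closedBall_subset_ball hr
  have h1mem : (1:ℂ) ∈ ball (0:ℂ) r := by simpa [mem_ball_zero_iff] using hr
  intro N
  induction N with
  | zero =>
    intro f hf h1 hcard
    refine ⟨0, ![], f, hf, by simp, ?_, fun z => by simp⟩
    intro z hz
    by_contra hz0
    have hfin := myFiniteZeros hr f hf h1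
    have : z ∈ {z ∈ closedBall (0:ℂ) 1 | f z = 0} := ⟨hz, hz0⟩
    have := Set.ncard_pos (hfin) |>.mpr ⟨z, this⟩
    omega
  | succ N ih =>
    intro f hf h1 hcard
    by_cases hex : ∃ a ∈ closedBall (0:ℂ) 1, f a = 0
    · obtain ⟨a, hacb, hfa0⟩ := hex
      have haV : a ∈ ball (0:ℂ) r := hsub hacb
      have hA : AnalyticAt ℂ f a := hf.analyticAt (isOpen_ball.mem_nhds haV)
      have hord_ne : analyticOrderAt f a ≠ ⊤ := by
        intro htop
        have hev := (analyticOrderAt_eq_top).mp htop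
        have := (hf.analyticOnNhd isOpen_ball).eqOn_zero_of_preconnected_of_eventuallyEq_zero
          (convex_ball (0:ℂ) r).isPreconnected haV hev
        exact h1 (this h1mem)
      obtain ⟨n₀, hn₀⟩ := WithTop.ne_top_iff_exists.mp hord_ne
      obtain ⟨k, g₁, hg₁, hg₁a, hkey⟩ :=
        myFactorPow (ball (0:ℂ) r) isOpen_ball a haV n₀ f hf hA hn₀.symm
      have hg₁1 : g₁ 1 ≠ 0 := by
        intro h0
        apply h1
        rw [hkey 1, h0, mul_zero]
      have hZ : {z ∈ closedBall (0:ℂ) 1 | g₁ z = 0}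
          = {z ∈ closedBall (0:ℂ) 1 | f z = 0} \ {a} := by
        ext z
        simp only [Set.mem_setOf_eq, Set.mem_diff, Set.mem_singleton_iff]
        constructor
        · rintro ⟨hz, hz0⟩
          refine ⟨⟨hz, by rw [hkey z, hz0, mul_zero]⟩, ?_⟩
          rintro rfl; exact hg₁a hz0
        · rintro ⟨⟨hz, hz0⟩, hza⟩
          refine ⟨hz, ?_⟩
          have hne : (z - a) ^ k ≠ 0 := pow_ne_zero _ (sub_ne_zero.mpr hza)
          have := hkey z
          rw [hz0] at this
          exact (mul_eq_zero.mp this.symm).resolve_left hne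
      have hfin := myFiniteZeros hr f hf h1
      have hmem : a ∈ {z ∈ closedBall (0:ℂ) 1 | f z = 0} := ⟨hacb, hfa0⟩
      have hlt : {z ∈ closedBall (0:ℂ) 1 | g₁ z = 0}.ncard ≤ N := by
        rw [hZ]
        have := Set.ncard_diff_singleton_lt_of_mem hmem hfin
        omega
      obtain ⟨n₁, b, g, hg, hbmem, hgne, hkey₂⟩ := ih g₁ hg₁ hg₁1 hlt
      refine ⟨k + n₁, Fin.append (fun _ => a) b, g, hg, ?_, hgne, ?_⟩
      · intro i
        refine Fin.addCases (fun j => ?_) (fun j => ?_) i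
        · simp only [Fin.append_left]
          exact ⟨hacb, hfa0⟩
        · simp only [Fin.append_right]
          refine ⟨(hbmem j).1, ?_⟩
          rw [hkey (b j), (hbmem j).2, mul_zero]
      · intro z
        rw [Fin.prod_univ_add]
        simp only [Fin.append_left, Fin.append_right]
        rw [Finset.prod_const]
        simp only [Finset.card_univ, Fintype.card_fin]
        rw [hkey z, hkey₂ z]
        ring
    · push_neg at hex
      exact ⟨0, ![], f, hf, by simp, fun z hz => hex z hz, fun z => by simp⟩


lemma myBlaschkeAbs (a z : ℂ) (hz : ‖z‖ = 1) :
    ‖1 - (starRingEnd ℂ) a * z‖ = ‖z - a‖ := by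
  have hzz : z * (starRingEnd ℂ) z = 1 := by
    rw [Complex.mul_conj]
    norm_cast
    rw [Complex.normSq_eq_norm_sq]
    simp [hz]
  have key : z * (starRingEnd ℂ) (1 - (starRingEnd ℂ) a * z) = z - a := by
    rw [map_sub, map_one, map_mul, Complex.conj_conj]
    have e : z * (1 - a * (starRingEnd ℂ) z) = z - a * (z * (starRingEnd ℂ) z) := by ring
    rw [e, hzz, mul_one]
  calc ‖1 - (starRingEnd ℂ) a * z‖
      = ‖z‖ * ‖(starRingEnd ℂ) (1 - (starRingEnd ℂ) a * z)‖ := by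
        rw [RCLike.norm_conj, hz, one_mul]
    _ = ‖z * (starRingEnd ℂ) (1 - (starRingEnd ℂ) a * z)‖ := (norm_mul _ _).symm
    _ = ‖z - a‖ := by rw [key]

theorem stmt_17 (U : Set ℂ) (hU : IsOpen U)
    (hUD : Metric.closedBall (0 : ℂ) 1 ⊆ U)
    (f : ℂ → ℂ) (hf : DifferentiableOn ℂ f U)
    (hmod : ∀ z : ℂ, ‖z‖ = 1 → ‖f z‖ = 1) :
    ∃ (n : ℕ) (C : ℂ) (a : Fin n → ℂ),
      ‖C‖ = 1 ∧ (∀ i, ‖a i‖ < 1) ∧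
      ∀ z ∈ Metric.closedBall (0 : ℂ) 1,
        f z = C * ∏ i, (z - a i) / (1 - (starRingEnd ℂ) (a i) * z) := by
  -- find r > 1 with ball 0 r ⊆ U
  obtain ⟨δ, hδ, hth⟩ := (isCompact_closedBall (0:ℂ) 1).exists_cthickening_subset_open hU hUD
  have hball : ball (0:ℂ) (1 + δ) ⊆ U := by
    refine subset_trans ?_ hth
    rw [cthickening_closedBall hδ.le zero_le_one]
    rw [add_comm δ 1]
    exact ball_subset_closedBall
  set r := 1 + δ with hrdef
  have hr : 1 < r := by simp [hrdef, hδ]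
  have hsub : closedBall (0:ℂ) 1 ⊆ ball (0:ℂ) r := closedBall_subset_ball hr
  have hfV : DifferentiableOn ℂ f (ball (0:ℂ) r) := hf.mono hball
  have hmod' : ∀ z : ℂ, ‖z‖ = 1 → ‖f z‖ = 1 := by
    intro z hz
    exact hmod z hz
  have h1 : f 1 ≠ 0 := by
    intro h0
    have := hmod' 1 (by simp)
    rw [h0] at this; simp at this
  obtain ⟨n, a, g, hg, hamem, hgne, hkey⟩ :=
    myFactorAll hr {z ∈ closedBall (0:ℂ) 1 | f z = 0}.ncard f hfV h1 le_rfl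
  -- |a i| < 1
  have halt : ∀ i, ‖a i‖ < 1 := by
    intro i
    rcases lt_or_eq_of_le (mem_closedBall_zero_iff.mp (hamem i).1) with h | h
    · exact h
    · exfalso
      have := hmod' (a i) h
      rw [(hamem i).2] at this
      simp at this
  -- denominators nonzero on closed ball
  have hden : ∀ z ∈ closedBall (0:ℂ) 1, ∀ i, (1 - (starRingEnd ℂ) (a i) * z) ≠ 0 := by
    intro z hz i h0
    have h1' : (starRingEnd ℂ) (a i) * z = 1 := by
      have := sub_eq_zero.mp h0; exact this.symm
    have : ‖(starRingEnd ℂ) (a i) * z‖ < 1 := by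
      rw [norm_mul, RCLike.norm_conj]
      calc ‖a i‖ * ‖z‖ ≤ ‖a i‖ * 1 :=
            mul_le_mul_of_nonneg_left (mem_closedBall_zero_iff.mp hz) (norm_nonneg _)
        _ < 1 := by simpa using halt i
    rw [h1'] at this; simp at this
  -- h function
  set h : ℂ → ℂ := fun z => g z * ∏ i, (1 - (starRingEnd ℂ) (a i) * z) with hhdef
  have hhdiff : DifferentiableOn ℂ h (ball (0:ℂ) r) := by
    apply hg.mul
    apply DifferentiableOn.fun_finsetProd
    intro i _
    apply DifferentiableOn.sub (differentiableOn_const 1)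
    exact (differentiable_id.const_mul _).differentiableOn
  have hhne : ∀ z ∈ closedBall (0:ℂ) 1, h z ≠ 0 := by
    intro z hz
    exact mul_ne_zero (hgne z hz) (Finset.prod_ne_zero_iff.mpr fun i _ => hden z hz i)
  -- boundary modulus
  have hbd : ∀ z ∈ sphere (0:ℂ) 1, ‖h z‖ = 1 := by
    intro z hz
    have hz1 : ‖z‖ = 1 := by simpa [mem_sphere_iff_norm] using hz
    have e1 : ‖h z‖ = ‖g z‖ * ∏ i, ‖z - a i‖ := by
      rw [hhdef]
      simp only [norm_mul, norm_prod]
      congr 1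
      exact Finset.prod_congr rfl fun i _ => myBlaschkeAbs (a i) z hz1
    have e2 : ‖f z‖ = (∏ i, ‖z - a i‖) * ‖g z‖ := by
      rw [hkey z, norm_mul, norm_prod]
    rw [e1, mul_comm, ← e2, hmod' z hz1]
  have hcl : closure (ball (0:ℂ) 1) = closedBall (0:ℂ) 1 := closure_ball 0 one_ne_zero
  have hfr : frontier (ball (0:ℂ) 1) = sphere (0:ℂ) 1 := frontier_ball 0 one_ne_zero
  have hballcb : ball (0:ℂ) 1 ⊆ closedBall (0:ℂ) 1 := ball_subset_closedBall
  -- max modulus: ‖h‖ ≤ 1 on closed ball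
  have hdc : DiffContOnCl ℂ h (ball (0:ℂ) 1) := by
    apply DifferentiableOn.diffContOnCl
    rw [hcl]
    exact hhdiff.mono hsub
  have hle1 : ∀ z ∈ closedBall (0:ℂ) 1, ‖h z‖ ≤ 1 := by
    intro z hz
    apply Complex.norm_le_of_forall_mem_frontier_norm_le isBounded_ball hdc
    · intro w hw
      rw [hfr] at hw
      exact (hbd w hw).le
    · rwa [hcl]
  -- inverse
  have hdcinv : DiffContOnCl ℂ (fun z => (h z)⁻¹) (ball (0:ℂ) 1) := by
    constructor
    · exact ((hhdiff.mono (hballcb.trans hsub)).inv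
        fun z hz => hhne z (hballcb hz))
    · rw [hcl]
      exact ((hhdiff.mono hsub).continuousOn).inv₀ hhne
  have hinv1 : ‖(h 0)⁻¹‖ ≤ 1 := by
    apply Complex.norm_le_of_forall_mem_frontier_norm_le isBounded_ball hdcinv
    · intro w hw
      rw [hfr] at hw
      rw [norm_inv, hbd w hw]
      norm_num
    · rw [hcl]; exact mem_closedBall_self zero_le_one
  have h0mem : (0:ℂ) ∈ closedBall (0:ℂ) 1 := mem_closedBall_self zero_le_one
  have h0pos : 0 < ‖h 0‖ := norm_pos_iff.mpr (hhne 0 h0mem)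
  have h0ge : 1 ≤ ‖h 0‖ := by
    rw [norm_inv] at hinv1
    have h2 := mul_le_mul_of_nonneg_right hinv1 h0pos.le
    rw [inv_mul_cancel₀ h0pos.ne'] at h2
    simpa using h2
  have h0eq : ‖h 0‖ = 1 := le_antisymm (hle1 0 h0mem) h0ge
  -- max at center
  have hmax : IsMaxOn (norm ∘ h) (ball (0:ℂ) 1) 0 := by
    intro z hz
    simp only [Function.comp_apply]
    rw [h0eq]
    exact hle1 z (hballcb hz)
  have hconst := Complex.eqOn_closedBall_of_isMaxOn_norm hdc hmax
  set C := h 0 with hCdef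
  refine ⟨n, C, a, ?_, fun i => by exact halt i, ?_⟩
  · exact h0eq
  · intro z hz
    have hCz : h z = C := hconst hz
    have hD : (∏ i, (1 - (starRingEnd ℂ) (a i) * z)) ≠ 0 :=
      Finset.prod_ne_zero_iff.mpr fun i _ => hden z hz i
    have hgz : g z = C / ∏ i, (1 - (starRingEnd ℂ) (a i) * z) := by
      rw [← hCz, hhdef]
      exact (mul_div_cancel_right₀ (g z) hD).symm
    rw [hkey z, hgz, Finset.prod_div_distrib]
    field_simp
end

section
/- Let B(z) = C · ∏_{i=1}^n (z − a_i)/(1 − conj(a_i)·z) be a finite Blaschke product with n ≥ 2 such that |B'(z)| > 1 for all z with |z| = 1. Then there exist radii r and R with 0 < r < 1 < R, with R < 1/|a_i| for every i with a_i ≠ 0, such that: |B(z)| < r for every z with |z| = r, and |B(z)| > R for every z with |z| = R. In particular B maps the circle of radius r strictly inside the disk of radius r and maps the circle of radius R strictly outside the disk of radius R. -/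
open Complex Metric Set

section BlaschkeAux

lemma blaschke_normSq_diff (c w : ℂ) :
    Complex.normSq (1 - (starRingEnd ℂ) c * w) - Complex.normSq (w - c)
      = (1 - Complex.normSq c) * (1 - Complex.normSq w) := by
  simp only [Complex.normSq_apply, Complex.sub_re, Complex.sub_im, Complex.mul_re,
    Complex.mul_im, Complex.one_re, Complex.one_im, Complex.conj_re, Complex.conj_im]
  ring

lemma blaschke_den_ne' {c w : ℂ} (h : ‖c‖ * ‖w‖ < 1) :
    1 - (starRingEnd ℂ) c * w ≠ 0 := by
  intro hh
  have h1 : (1 : ℂ) = (starRingEnd ℂ) c * w := by linear_combination hh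
  have := congrArg norm h1
  simp only [norm_one, norm_mul, Complex.norm_conj] at this
  linarith

lemma blaschke_den_ne {c w : ℂ} (hc : ‖c‖ < 1) (hw : ‖w‖ < 1) :
    1 - (starRingEnd ℂ) c * w ≠ 0 := by
  refine blaschke_den_ne' ?_
  nlinarith [norm_nonneg c, norm_nonneg w]

lemma blaschke_mob_lt {c w : ℂ} (hc : ‖c‖ < 1) (hw : ‖w‖ < 1) :
    ‖(w - c) / (1 - (starRingEnd ℂ) c * w)‖ < 1 := by
  have hden := blaschke_den_ne hc hw
  have hdpos : 0 < ‖1 - (starRingEnd ℂ) c * w‖ := norm_pos_iff.mpr hden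
  rw [norm_div, div_lt_one hdpos]
  have key := blaschke_normSq_diff c w
  have hc2 : Complex.normSq c < 1 := by
    rw [← Complex.sq_norm] at *; nlinarith [norm_nonneg c]
  have hw2 : Complex.normSq w < 1 := by
    rw [← Complex.sq_norm] at *; nlinarith [norm_nonneg w]
  have : Complex.normSq (w - c) < Complex.normSq (1 - (starRingEnd ℂ) c * w) := by nlinarith
  have h1 := Complex.sq_norm (w - c)
  have h2 := Complex.sq_norm (1 - (starRingEnd ℂ) c * w)
  nlinarith [norm_nonneg (w - c), norm_nonneg (1 - (starRingEnd ℂ) c * w)]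

noncomputable def blaschkeMob (c w : ℂ) : ℂ := (w - c) / (1 - (starRingEnd ℂ) c * w)

lemma blaschkeMob_hasDerivAt (c : ℂ) {w : ℂ} (h : 1 - (starRingEnd ℂ) c * w ≠ 0) :
    HasDerivAt (blaschkeMob c)
      ((1 * (1 - (starRingEnd ℂ) c * w) - (w - c) * (-(starRingEnd ℂ) c)) /
        (1 - (starRingEnd ℂ) c * w) ^ 2) w := by
  have h1 : HasDerivAt (fun x : ℂ => x - c) 1 w := (hasDerivAt_id w).sub_const c
  have h2 : HasDerivAt (fun x : ℂ => 1 - (starRingEnd ℂ) c * x) (-(starRingEnd ℂ) c) w := by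
    simpa using ((hasDerivAt_id w).const_mul ((starRingEnd ℂ) c)).const_sub 1
  exact h1.div h2 h

lemma blaschkeMob_mapsTo {c : ℂ} (hc : ‖c‖ < 1) :
    MapsTo (blaschkeMob c) (ball 0 1) (ball 0 1) := by
  intro w hw
  simp only [mem_ball_zero_iff] at *
  exact blaschke_mob_lt hc hw

lemma blaschkeMob_diffOn {c : ℂ} (hc : ‖c‖ < 1) :
    DifferentiableOn ℂ (blaschkeMob c) (ball 0 1) := fun w hw =>
  ((blaschkeMob_hasDerivAt c
    (blaschke_den_ne hc (by simpa [mem_ball_zero_iff] using hw))).differentiableAt).differentiableWithinAt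

theorem blaschke_schwarz_pick {f : ℂ → ℂ} (hd : DifferentiableOn ℂ f (ball 0 1))
    (hm : MapsTo f (ball 0 1) (ball 0 1)) {z : ℂ} (hz : ‖z‖ < 1) :
    ‖deriv f z‖ * (1 - ‖z‖ ^ 2) ≤ 1 - ‖f z‖ ^ 2 := by
  have hzball : z ∈ ball (0:ℂ) 1 := by simpa [mem_ball_zero_iff] using hz
  set b := f z with hbdef
  have hb : ‖b‖ < 1 := by simpa [mem_ball_zero_iff] using hm hzball
  have hnz : ‖-z‖ < 1 := by simpa using hz
  have hφ0 : blaschkeMob (-z) 0 = z := by simp [blaschkeMob]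
  have hψb : blaschkeMob b b = 0 := by simp [blaschkeMob]
  have hφ : HasDerivAt (blaschkeMob (-z)) (((1 - ‖z‖ ^ 2 : ℝ) : ℂ)) 0 := by
    have := blaschkeMob_hasDerivAt (-z) (w := 0) (by simp)
    convert this using 1
    simp [mul_comm, Complex.mul_conj']
  have hbden : 1 - (starRingEnd ℂ) b * b ≠ 0 := blaschke_den_ne hb hb
  have hcb : (starRingEnd ℂ) b * b = ((‖b‖ ^ 2 : ℝ) : ℂ) := by
    rw [mul_comm, Complex.mul_conj']
    norm_cast
  have hψ : HasDerivAt (blaschkeMob b) ((1 - ((‖b‖ ^ 2 : ℝ) : ℂ))⁻¹) b := by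
    have := blaschkeMob_hasDerivAt b (w := b) hbden
    convert this using 1
    rw [hcb] at hbden
    have gen : ∀ X : ℂ, X ≠ 0 → X⁻¹ = (1 * X - (b - b) * (-(starRingEnd ℂ) b)) / X ^ 2 := by
      intro X hX
      field_simp
      ring
    rw [hcb]
    exact gen _ hbden
  have hfz : HasDerivAt f (deriv f z) z :=
    (hd.differentiableAt (isOpen_ball.mem_nhds hzball)).hasDerivAt
  have hfφ : HasDerivAt (f ∘ blaschkeMob (-z)) (deriv f z * ((1 - ‖z‖ ^ 2 : ℝ) : ℂ)) 0 := by
    refine HasDerivAt.comp 0 ?_ hφ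
    rw [hφ0]
    exact hfz
  have hg : HasDerivAt (blaschkeMob b ∘ (f ∘ blaschkeMob (-z)))
      ((1 - ((‖b‖ ^ 2 : ℝ) : ℂ))⁻¹ *
        (deriv f z * ((1 - ‖z‖ ^ 2 : ℝ) : ℂ))) 0 := by
    refine HasDerivAt.comp 0 ?_ hfφ
    show HasDerivAt (blaschkeMob b) _ ((f ∘ blaschkeMob (-z)) 0)
    have : (f ∘ blaschkeMob (-z)) 0 = b := by simp [Function.comp, hφ0, ← hbdef]
    rw [this]
    exact hψ
  have hmg : MapsTo (blaschkeMob b ∘ (f ∘ blaschkeMob (-z))) (ball 0 1) (ball 0 1) :=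
    (blaschkeMob_mapsTo hb).comp (hm.comp (blaschkeMob_mapsTo hnz))
  have hdg : DifferentiableOn ℂ (blaschkeMob b ∘ (f ∘ blaschkeMob (-z))) (ball 0 1) :=
    (blaschkeMob_diffOn hb).comp (hd.comp (blaschkeMob_diffOn hnz) (blaschkeMob_mapsTo hnz))
      ((hm.comp (blaschkeMob_mapsTo hnz)))
  have hg0 : (blaschkeMob b ∘ (f ∘ blaschkeMob (-z))) 0 = 0 := by
    simp [Function.comp, hφ0, ← hbdef, hψb]
  have hone := Complex.norm_deriv_le_one_of_mapsTo_ball hdg (hmg.mono_right (by rw [hg0]; exact ball_subset_closedBall)) one_pos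
  rw [hg.deriv] at hone
  have hb2 : ‖b‖ ^ 2 < 1 := by nlinarith [norm_nonneg b]
  have hz2 : ‖z‖ ^ 2 < 1 := by nlinarith [norm_nonneg z]
  rw [norm_mul, norm_mul, norm_inv] at hone
  have e1 : ‖(1 : ℂ) - ((‖b‖ ^ 2 : ℝ) : ℂ)‖ = 1 - ‖b‖ ^ 2 := by
    rw [show (1 : ℂ) - ((‖b‖ ^ 2 : ℝ) : ℂ)
        = ((1 - ‖b‖ ^ 2 : ℝ) : ℂ) by push_cast; ring,
      Complex.norm_real, Real.norm_eq_abs, abs_of_pos (by linarith)]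
  have e2 : ‖((1 - ‖z‖ ^ 2 : ℝ) : ℂ)‖ = 1 - ‖z‖ ^ 2 := by
    rw [Complex.norm_real, Real.norm_eq_abs, abs_of_pos (by linarith)]
  rw [e1, e2] at hone
  rw [inv_mul_le_iff₀ (by linarith)] at hone
  linarith [hone]

lemma blaschke_factor_id {c z : ℂ} (hz : z ≠ 0) (hzc : z ≠ c)
    (hden : 1 - (starRingEnd ℂ) c * z ≠ 0) :
    ((z - c) / (1 - (starRingEnd ℂ) c * z)) * ((z⁻¹ - (starRingEnd ℂ) c) / (1 - c * z⁻¹)) = 1 := by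
  have h1 : z - c ≠ 0 := sub_ne_zero.mpr hzc
  have h2 : 1 - c * z⁻¹ = (z - c) / z := by field_simp
  have h3 : z⁻¹ - (starRingEnd ℂ) c = (1 - (starRingEnd ℂ) c * z) / z := by
    field_simp
  rw [h2, h3, div_div_div_cancel_right₀, div_mul_div_comm,
    mul_comm (z - c) (1 - (starRingEnd ℂ) c * z)]
  exact div_self (mul_ne_zero hden h1)
  exact hz

end BlaschkeAux

theorem stmt_18 (n : ℕ) (hn : 2 ≤ n) (a : Fin n → ℂ) (ha : ∀ i, ‖a i‖ < 1)
    (C : ℂ) (hC : ‖C‖ = 1)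
    (B : ℂ → ℂ)
    (hB : ∀ w : ℂ, B w = C * ∏ i, (w - a i) / (1 - (starRingEnd ℂ) (a i) * w))
    (hexp : ∀ z : ℂ, ‖z‖ = 1 → 1 < ‖deriv B z‖) :
    ∃ r R : ℝ, 0 < r ∧ r < 1 ∧ 1 < R ∧
      (∀ i, a i ≠ 0 → R < 1 / ‖a i‖) ∧
      (∀ z : ℂ, ‖z‖ = r → ‖B z‖ < r) ∧
      (∀ z : ℂ, ‖z‖ = R → R < ‖B z‖) := by
  have hBF : B = fun w => C * ∏ i, (w - a i) / (1 - (starRingEnd ℂ) (a i) * w) := funext hB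
  subst hBF
  set B : ℂ → ℂ := fun w => C * ∏ i, (w - a i) / (1 - (starRingEnd ℂ) (a i) * w) with hBdef
  have i₀ : Fin n := ⟨0, by omega⟩
  -- B maps the unit ball into itself
  have hmapsB : MapsTo B (ball 0 1) (ball 0 1) := by
    intro w hw
    rw [mem_ball_zero_iff] at hw ⊢
    have habs : ‖B w‖ = ∏ i, ‖(w - a i) / (1 - (starRingEnd ℂ) (a i) * w)‖ := by
      rw [hBdef]
      simp only [norm_mul, hC, one_mul]
      exact norm_prod _ _
    rw [habs]
    rw [← Finset.mul_prod_erase Finset.univ _ (Finset.mem_univ i₀)]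
    have hlt : ∀ i, ‖(w - a i) / (1 - (starRingEnd ℂ) (a i) * w)‖ < 1 :=
      fun i => blaschke_mob_lt (ha i) hw
    have hrest : ∏ i ∈ Finset.univ.erase i₀,
        ‖(w - a i) / (1 - (starRingEnd ℂ) (a i) * w)‖ ≤ 1 :=
      Finset.prod_le_one (fun i _ => norm_nonneg _) (fun i _ => (hlt i).le)
    calc ‖(w - a i₀) / (1 - (starRingEnd ℂ) (a i₀) * w)‖ *
          ∏ i ∈ Finset.univ.erase i₀, ‖(w - a i) / (1 - (starRingEnd ℂ) (a i) * w)‖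
        ≤ ‖(w - a i₀) / (1 - (starRingEnd ℂ) (a i₀) * w)‖ * 1 :=
          mul_le_mul_of_nonneg_left hrest (norm_nonneg _)
      _ < 1 := by rw [mul_one]; exact hlt i₀
  -- the open set where B is holomorphic
  set U : Set ℂ := ⋂ i, {w : ℂ | 1 - (starRingEnd ℂ) (a i) * w ≠ 0} with hUdef
  have hUopen : IsOpen U := by
    refine isOpen_iInter_of_finite fun i => ?_
    have : {w : ℂ | 1 - (starRingEnd ℂ) (a i) * w ≠ 0}
        = (fun w => 1 - (starRingEnd ℂ) (a i) * w) ⁻¹' {x | x ≠ 0} := rfl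
    rw [this]
    exact IsOpen.preimage (by fun_prop) isOpen_ne
  have hmemU : ∀ w : ℂ, (∀ i, ‖a i‖ * ‖w‖ < 1) → w ∈ U := by
    intro w h
    rw [hUdef, Set.mem_iInter]
    exact fun i => blaschke_den_ne' (h i)
  have hdiffU : DifferentiableOn ℂ B U := by
    intro w hw
    rw [hUdef, Set.mem_iInter] at hw
    apply DifferentiableAt.differentiableWithinAt
    apply DifferentiableAt.const_mul
    have hgen : ∀ s : Finset (Fin n),
        DifferentiableAt ℂ (fun w => ∏ i ∈ s, (w - a i) / (1 - (starRingEnd ℂ) (a i) * w)) w := by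
      intro s
      induction s using Finset.induction with
      | empty => simp only [Finset.prod_empty]; exact differentiableAt_const _
      | insert _ _ hj ih =>
        rename_i j s'
        have : (fun w => ∏ i ∈ insert j s', (w - a i) / (1 - (starRingEnd ℂ) (a i) * w))
            = fun w => ((w - a j) / (1 - (starRingEnd ℂ) (a j) * w)) *
              ∏ i ∈ s', (w - a i) / (1 - (starRingEnd ℂ) (a i) * w) := by
          funext w
          rw [Finset.prod_insert hj]
        rw [this]
        refine DifferentiableAt.mul ?_ ih
        refine DifferentiableAt.div ?_ ?_ (hw j)
        · exact differentiableAt_id.sub (differentiableAt_const _)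
        · exact (differentiableAt_const _).sub ((differentiableAt_const _).mul differentiableAt_id)
    exact hgen Finset.univ
  -- ball ⊆ U
  have hballU : ball (0:ℂ) 1 ⊆ U := by
    intro w hw
    rw [mem_ball_zero_iff] at hw
    refine hmemU w fun i => ?_
    nlinarith [norm_nonneg (a i), norm_nonneg w, ha i]
  have hdiffBall : DifferentiableOn ℂ B (ball 0 1) := hdiffU.mono hballU
  -- the expansion set V is open and contains the unit sphere
  have hcderiv : ContinuousOn (fun w => ‖deriv B w‖) U :=
    continuous_norm.comp_continuousOn
      (((hdiffU.analyticOnNhd hUopen).deriv_of_isOpen hUopen).continuousOn)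
  set V : Set ℂ := U ∩ (fun w => ‖deriv B w‖) ⁻¹' (Set.Ioi 1) with hVdef
  have hVopen : IsOpen V := hcderiv.isOpen_inter_preimage hUopen isOpen_Ioi
  have hsubV : sphere (0:ℂ) 1 ⊆ V := by
    intro z hz
    rw [mem_sphere_zero_iff_norm] at hz
    constructor
    · exact hmemU z fun i => by rw [hz, mul_one]; exact ha i
    · exact hexp z hz
  obtain ⟨ε, hε, hthick⟩ :=
    (isCompact_sphere (0:ℂ) 1).exists_thickening_subset_open hVopen hsubV
  -- membership criterion for V
  have hmemV : ∀ z : ℂ, z ≠ 0 → |‖z‖ - 1| < ε → z ∈ V := by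
    intro z hz0 hzd
    apply hthick
    rw [Metric.mem_thickening_iff]
    set s := ‖z‖ with hsdef
    have hs : 0 < s := norm_pos_iff.mpr hz0
    refine ⟨((s : ℂ))⁻¹ * z, ?_, ?_⟩
    · rw [mem_sphere_zero_iff_norm, norm_mul, norm_inv,
        Complex.norm_real, Real.norm_eq_abs, abs_of_pos hs, ← hsdef]
      field_simp
    · rw [dist_eq_norm]
      have he : z - ((s : ℂ))⁻¹ * z = ((1 - s⁻¹ : ℝ) : ℂ) * z := by push_cast; ring
      rw [he, norm_mul, Complex.norm_real, Real.norm_eq_abs, ← hsdef]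
      have he2 : |1 - s⁻¹| * s = |s - 1| := by
        have hms : (1 - s⁻¹) * s = s - 1 := by field_simp
        calc |1 - s⁻¹| * s = |1 - s⁻¹| * |s| := by rw [abs_of_pos hs]
          _ = |(1 - s⁻¹) * s| := (abs_mul _ _).symm
          _ = |s - 1| := by rw [hms]
      rw [he2]
      exact hzd
  -- key inner estimate
  have hkey : ∀ w : ℂ, ‖w‖ < 1 → w ∈ V → ‖B w‖ < ‖w‖ := by
    intro w h1 h2
    have sp := blaschke_schwarz_pick hdiffBall hmapsB h1
    have hd : 1 < ‖deriv B w‖ := h2.2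
    have h1sq : 0 < 1 - ‖w‖ ^ 2 := by nlinarith [norm_nonneg w]
    nlinarith [norm_nonneg (B w), norm_nonneg w]
  -- choice of radii
  obtain ⟨r, hrdef⟩ : ∃ x : ℝ, x = 1 - min ε 1 / 2 := ⟨_, rfl⟩
  have hrpos : 0 < r := by
    have : min ε 1 ≤ 1 := min_le_right _ _
    rw [hrdef]; linarith
  have hrlt1 : r < 1 := by
    have : 0 < min ε 1 := lt_min hε one_pos
    rw [hrdef]; linarith
  have hrε : 1 - r < ε := by
    have h1 : min ε 1 ≤ ε := min_le_left _ _
    rw [hrdef]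
    have : 0 < min ε 1 := lt_min hε one_pos
    linarith
  obtain ⟨M, hMdef⟩ : ∃ x : ℝ, x = max (1/2) (Finset.univ.sup' (show Finset.univ.Nonempty from ⟨i₀, Finset.mem_univ i₀⟩)
    (fun i => ‖a i‖)) := ⟨_, rfl⟩
  have hMpos : 0 < M := hMdef ▸ lt_of_lt_of_le (by norm_num) (le_max_left _ _)
  have hM1 : M < 1 := by
    rw [hMdef]
    apply max_lt (by norm_num)
    rw [Finset.sup'_lt_iff]
    exact fun i _ => ha i
  have hMge : ∀ i, ‖a i‖ ≤ M :=
    fun i => hMdef ▸ le_trans (Finset.le_sup' (fun j => ‖a j‖) (Finset.mem_univ i)) (le_max_right _ _)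
  obtain ⟨R, hRdef⟩ : ∃ x : ℝ, x = min ((1 + 1/M)/2) ((1 + 1/r)/2) := ⟨_, rfl⟩
  have hMinv : 1 < 1/M := by rw [lt_div_iff₀ hMpos]; linarith
  have hrinv : 1 < 1/r := by rw [lt_div_iff₀ hrpos]; linarith
  have hR1 : 1 < R := by
    rw [hRdef]
    apply lt_min <;> linarith
  have hRM : R < 1/M := by
    calc R ≤ (1 + 1/M)/2 := hRdef ▸ min_le_left _ _
      _ < 1/M := by linarith
  have hRr : R < 1/r := by
    calc R ≤ (1 + 1/r)/2 := hRdef ▸ min_le_right _ _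
      _ < 1/r := by linarith
  have hRpos : 0 < R := by linarith
  refine ⟨r, R, hrpos, hrlt1, hR1, ?_, ?_, ?_⟩
  · -- R < 1/|a i|
    intro i hi
    have hai : 0 < ‖a i‖ := norm_pos_iff.mpr hi
    calc R < 1/M := hRM
      _ ≤ 1 / ‖a i‖ := by
        apply one_div_le_one_div_of_le hai (hMge i)
  · -- inner circle
    intro z hz
    have hz0 : z ≠ 0 := by
      intro h
      rw [h, norm_zero] at hz
      linarith
    have hzV : z ∈ V := by
      apply hmemV z hz0
      rw [hz, abs_of_nonpos (by linarith)]
      simp only [neg_sub]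
      exact hrε
    have := hkey z (by rw [hz]; exact hrlt1) hzV
    rwa [hz] at this
  · -- outer circle
    intro z hz
    have hz0 : z ≠ 0 := by
      intro h
      rw [h, norm_zero] at hz
      linarith
    set w : ℂ := ((starRingEnd ℂ) z)⁻¹ with hwdef
    have hw0 : w ≠ 0 := by
      rw [hwdef]
      simp only [ne_eq, inv_eq_zero, map_eq_zero]
      exact hz0
    have hwabs : ‖w‖ = 1/R := by
      rw [hwdef, norm_inv, Complex.norm_conj, hz, one_div]
    have hwlt : ‖w‖ < 1 := by
      rw [hwabs]
      rw [div_lt_one hRpos]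
      linarith
    have hwV : w ∈ V := by
      apply hmemV w hw0
      rw [hwabs, abs_of_nonpos (by rw [sub_nonpos, div_le_one hRpos]; linarith), neg_sub]
      have h1R : r < 1/R := by
        rw [lt_div_iff₀ hRpos]
        calc r * R < r * (1/r) := by apply mul_lt_mul_of_pos_left hRr hrpos
          _ = 1 := by field_simp
      linarith [h1R, hrε]
    have hBw := hkey w hwlt hwV
    -- reflection identity: B z * conj (B w) = 1
    have hzinv : w⁻¹ = (starRingEnd ℂ) z := by rw [hwdef, inv_inv]
    have hden : ∀ i, 1 - (starRingEnd ℂ) (a i) * z ≠ 0 := by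
      intro i
      apply blaschke_den_ne'
      rw [hz]
      calc ‖a i‖ * R ≤ M * R := by
            apply mul_le_mul_of_nonneg_right (hMge i) (le_of_lt hRpos)
        _ < M * (1/M) := by apply mul_lt_mul_of_pos_left hRM hMpos
        _ = 1 := by field_simp
    have hzai : ∀ i, z ≠ a i := by
      intro i h
      rw [h] at hz
      have := ha i
      linarith
    have hrefl : B z * (starRingEnd ℂ) (B w) = 1 := by
      rw [hBdef]
      simp only [map_mul]
      rw [map_prod]
      rw [mul_mul_mul_comm]
      have hCC : C * (starRingEnd ℂ) C = 1 := by
        rw [Complex.mul_conj]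
        rw [← Complex.sq_norm, hC]
        norm_num
      rw [hCC, one_mul, ← Finset.prod_mul_distrib]
      apply Finset.prod_eq_one
      intro i _
      have hconj : (starRingEnd ℂ) ((w - a i) / (1 - (starRingEnd ℂ) (a i) * w))
          = (z⁻¹ - (starRingEnd ℂ) (a i)) / (1 - a i * z⁻¹) := by
        rw [map_div₀, map_sub, map_sub, map_mul, Complex.conj_conj, map_one]
        congr 2
        · rw [hwdef, map_inv₀, Complex.conj_conj]
        · rw [hwdef, map_inv₀, Complex.conj_conj]
      rw [hconj]
      exact blaschke_factor_id hz0 (hzai i) (hden i)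
    have habs1 : ‖B z‖ * ‖B w‖ = 1 := by
      have := congrArg norm hrefl
      rwa [norm_mul, Complex.norm_conj, norm_one] at this
    have hBwpos : 0 < ‖B w‖ := by
      rcases (norm_nonneg (B w)).lt_or_eq with h | h
      · exact h
      · exfalso; rw [← h] at habs1; simp at habs1
    have hBwlt : ‖B w‖ < 1/R := by rwa [hwabs] at hBw
    -- |B z| = 1/|B w| > R
    rw [show ‖B z‖ = 1 / ‖B w‖ by
      field_simp at habs1 ⊢; linarith [habs1]]
    rw [lt_div_iff₀ hBwpos]
    calc R * ‖B w‖ < R * (1/R) := by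
          apply mul_lt_mul_of_pos_left hBwlt hRpos
      _ = 1 := by field_simp
end
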